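/- arXiv:0709.0099 — 7 statements merged into one kernel-verified Lean document; each statement's English description precedes it below -/
import Mathlib

section
/- If every AGW graph with at least two vertices and outdegree k ≥ 2 admits a coloring for which some pair of distinct states is stable, then every AGW graph has a synchronizing coloring. -/
/-- A directed cycle in the multigraph `E`: a nonempty list of distinct vertices,
consecutive vertices joined by edges, and an edge from the last back to the first. -/
def IsCycle {V : Type} (E : V → Multiset V) (l : List V) : Prop :=
  ∃ h : l ≠ [], l.Nodup ∧ l.Chain' (fun a b => b ∈ E a) ∧ l.head h ∈ E (l.getLast h)

/-- An AGW graph: constant outdegree `k`, strongly connected, and the gcd of the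
lengths of all directed cycles is 1 (every common divisor of cycle lengths is 1). -/
def IsAGW {V : Type} (E : V → Multiset V) (k : ℕ) : Prop :=
  (∀ v, Multiset.card (E v) = k) ∧
  (∀ u v : V, Relation.ReflTransGen (fun a b => b ∈ E a) u v) ∧
  (∀ d : ℕ, (∀ l : List V, IsCycle E l → d ∣ l.length) → d = 1)

/-- A coloring of the multigraph: for every vertex `v` the multiset of images
`{δ a v : a ∈ Fin k}` (with multiplicity) equals `E v`. -/
def IsColoring {V : Type} [Fintype V] {k : ℕ} (E : V → Multiset V)
    (δ : Fin k → V → V) : Prop :=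
  ∀ v, Multiset.map (fun a => δ a v) (Finset.univ : Finset (Fin k)).val = E v

/-- The map `δ_s` of a word `s`: apply the letters of `s` from left to right. -/
def wordMap {V : Type} {k : ℕ} (δ : Fin k → V → V) (s : List (Fin k)) (v : V) : V :=
  s.foldl (fun x a => δ a x) v

/-- A pair of states is synchronizing if some word maps them to the same state. -/
def SyncPair {V : Type} {k : ℕ} (δ : Fin k → V → V) (p q : V) : Prop :=
  ∃ s : List (Fin k), wordMap δ s p = wordMap δ s q

/-- A pair is stable if all of its images under words are equal or synchronizing. -/
def Stable {V : Type} {k : ℕ} (δ : Fin k → V → V) (p q : V) : Prop :=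
  ∀ u : List (Fin k), SyncPair δ (wordMap δ u p) (wordMap δ u q)

/-- A word is synchronizing if it maps the whole state set to a single state. -/
def IsSynchronizingWord {V : Type} {k : ℕ} (δ : Fin k → V → V) (s : List (Fin k)) : Prop :=
  ∃ q : V, ∀ v : V, wordMap δ s v = q

/-- An F-clique: an image `V·s` of the whole state set in which every pair of
distinct states is a deadlock (not synchronizing). -/
def IsFClique {V : Type} [Fintype V] [DecidableEq V] {k : ℕ}
    (δ : Fin k → V → V) (F : Finset V) : Prop :=
  (∃ s : List (Fin k), F = Finset.image (wordMap δ s) Finset.univ) ∧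
  ∀ p ∈ F, ∀ q ∈ F, p ≠ q → ¬ SyncPair δ p q

/-- A weight function: positive and a left eigenvector of the adjacency matrix
(multiplicities of edges) with eigenvalue `k`. -/
def IsWeight {V : Type} [Fintype V] [DecidableEq V] (E : V → Multiset V) (k : ℕ)
    (w : V → ℕ) : Prop :=
  (∀ v, 1 ≤ w v) ∧ ∀ q, (∑ p, w p * (E p).count q) = k * w q

/-- The weight of a set of vertices. -/
def weight {V : Type} (w : V → ℕ) (D : Finset V) : ℕ := ∑ p ∈ D, w p

/-- `D` is mapped to a single state by some word. -/
def IsSyncSet {V : Type} [Fintype V] [DecidableEq V] {k : ℕ} (δ : Fin k → V → V)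
    (D : Finset V) : Prop :=
  ∃ s : List (Fin k), (D.image (wordMap δ s)).card = 1

/-- An F-maximal set: a set mapped to a single state by some word, of maximal weight. -/
def IsFMaximal {V : Type} [Fintype V] [DecidableEq V] {k : ℕ} (δ : Fin k → V → V)
    (w : V → ℕ) (D : Finset V) : Prop :=
  IsSyncSet δ D ∧ ∀ D' : Finset V, IsSyncSet δ D' → weight w D' ≤ weight w D

/-- `w*`: the maximal weight of a set mapped to a single state by some word. -/
noncomputable def wstar {V : Type} [Fintype V] [DecidableEq V] {k : ℕ}
    (δ : Fin k → V → V) (w : V → ℕ) : ℕ :=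
  sSup {m | ∃ D : Finset V, IsSyncSet δ D ∧ weight w D = m}

/-- A spanning subgraph: a choice of one outgoing edge of every vertex. -/
def IsSpanning {V : Type} (E : V → Multiset V) (f : V → V) : Prop :=
  ∀ v, f v ∈ E v

/-- The level of a vertex: the least `m` such that `f^[m] v` is `f`-periodic. -/
noncomputable def level {V : Type} (f : V → V) (v : V) : ℕ :=
  sInf {m | ∃ n > 0, f^[n] (f^[m] v) = f^[m] v}

/-- The root of a vertex: its image on the cycle reached along its tree. -/
noncomputable def root {V : Type} (f : V → V) (v : V) : V :=
  f^[level f v] v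

section RCsupport

open List Finset

lemma RC_wordMap_nil {V : Type} {k : ℕ} (δ : Fin k → V → V) (v : V) :
    wordMap δ [] v = v := rfl

lemma RC_wordMap_cons {V : Type} {k : ℕ} (δ : Fin k → V → V) (a : Fin k)
    (s : List (Fin k)) (v : V) : wordMap δ (a :: s) v = wordMap δ s (δ a v) := rfl

lemma RC_wordMap_append {V : Type} {k : ℕ} (δ : Fin k → V → V) (s t : List (Fin k))
    (v : V) : wordMap δ (s ++ t) v = wordMap δ t (wordMap δ s v) := by
  simp [wordMap, List.foldl_append]

lemma RC_stable_refl {V : Type} {k : ℕ} (δ : Fin k → V → V) (p : V) : Stable δ p p :=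
  fun _ => ⟨[], rfl⟩

lemma RC_stable_symm {V : Type} {k : ℕ} {δ : Fin k → V → V} {p q : V}
    (h : Stable δ p q) : Stable δ q p := by
  intro u
  obtain ⟨s, hs⟩ := h u
  exact ⟨s, hs.symm⟩

lemma RC_stable_trans {V : Type} {k : ℕ} {δ : Fin k → V → V} {p q r : V}
    (h1 : Stable δ p q) (h2 : Stable δ q r) : Stable δ p r := by
  intro u
  obtain ⟨s, hs⟩ := h1 u
  obtain ⟨t, ht⟩ := h2 (u ++ s)
  refine ⟨s ++ t, ?_⟩
  rw [RC_wordMap_append, RC_wordMap_append, hs, ← RC_wordMap_append δ u s q, ← RC_wordMap_append δ u s r]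
  exact ht

lemma RC_stable_step {V : Type} {k : ℕ} {δ : Fin k → V → V} {p q : V}
    (h : Stable δ p q) (a : Fin k) : Stable δ (δ a p) (δ a q) :=
  fun u => h (a :: u)

lemma RC_exists_perm {α X : Type} [Fintype α] (f g : α → X)
    (h : Multiset.map f Finset.univ.val = Multiset.map g Finset.univ.val) :
    ∃ σ : Equiv.Perm α, ∀ a, f a = g (σ a) := by
  classical
  have hcount : ∀ c, Fintype.card {a // f a = c} = Fintype.card {a // g a = c} := by
    intro c
    have hc := congrArg (Multiset.count c) h
    rw [Multiset.count_map, Multiset.count_map] at hc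
    rw [Fintype.card_subtype, Fintype.card_subtype, Finset.card_def, Finset.card_def,
      Finset.filter_val, Finset.filter_val]
    simpa [eq_comm] using hc
  exact ⟨Equiv.ofFiberEquiv (fun c => Fintype.equivOfCardEq (hcount c)),
    fun a => (Equiv.ofFiberEquiv_map _ a).symm⟩

lemma RC_map_perm {α X : Type} [Fintype α] (f : α → X) (σ : Equiv.Perm α) :
    Multiset.map (fun a => f (σ a)) Finset.univ.val = Multiset.map f Finset.univ.val := by
  have h1 : Multiset.map (⇑σ) Finset.univ.val = Finset.univ.val := by
    have h2 := congrArg Finset.val (Finset.map_univ_equiv σ)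
    rwa [Finset.map_val] at h2
  calc Multiset.map (fun a => f (σ a)) Finset.univ.val
      = Multiset.map f (Multiset.map (⇑σ) Finset.univ.val) := by
        rw [Multiset.map_map]; rfl
    _ = Multiset.map f Finset.univ.val := by rw [h1]

end RCsupport

section RCwalk

open List

lemma RC_walk_dvd {X : Type} (E' : X → Multiset X) (d : ℕ)
    (hcyc : ∀ l : List X, IsCycle E' l → d ∣ l.length) :
    ∀ L : ℕ, ∀ c : ℕ → X, 0 < L → (∀ i < L, c (i + 1) ∈ E' (c i)) → c L = c 0 → d ∣ L := by
  intro L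
  induction L using Nat.strong_induction_on with
  | _ L IH =>
  intro c hL hstep hclose
  by_cases hinj : ∀ i j, i < j → j < L → c i ≠ c j
  · -- the walk is a cycle
    set l : List X := (List.range L).map c with hl
    have hlen : l.length = L := by simp [hl]
    have hne : l ≠ [] := by
      intro hnil
      rw [hnil] at hlen
      simp at hlen
      omega
    have hget : ∀ i (hi : i < l.length), l.get ⟨i, hi⟩ = c i := by
      intro i hi
      simp [hl]
    have hcycle : IsCycle E' l := by
      refine ⟨hne, ?_, ?_, ?_⟩
      · rw [List.nodup_iff_injective_get]
        rintro ⟨i, hi⟩ ⟨j, hj⟩ hij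
        rw [hget i hi, hget j hj] at hij
        rcases Nat.lt_trichotomy i j with hlt | heq | hgt
        · exact absurd hij (hinj i j hlt (hlen ▸ hj))
        · exact Fin.ext heq
        · exact absurd hij.symm (hinj j i hgt (hlen ▸ hi))
      · refine List.isChain_iff_getElem.mpr ?_
        intro i hi
        have := hstep i (by omega)
        rw [← hget i (by omega), ← hget (i+1) (by omega)] at this
        exact this
      · have h1 : l.head hne = c 0 := by
          rw [← List.get_mk_zero (by omega : 0 < l.length), hget]
        have h2 : l.getLast hne = c (L - 1) := by
          have hg := hget (l.length - 1) (by omega)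
          simp only [List.get_eq_getElem] at hg
          rw [List.getLast_eq_getElem, hg]
          congr 1
          omega
        rw [h1, h2, ← hclose]
        have := hstep (L - 1) (by omega)
        have heq : L - 1 + 1 = L := by omega
        rwa [heq] at this
    have := hcyc l hcycle
    rwa [hlen] at this
  · push_neg at hinj
    obtain ⟨i, j, hij, hjL, hcij⟩ := hinj
    -- split into two shorter closed walks
    have hd1 : d ∣ (j - i) := by
      refine IH (j - i) (by omega) (fun t => c (i + t)) (by omega) ?_ ?_
      · intro t ht
        show c (i + (t + 1)) ∈ E' (c (i + t))
        have he : i + (t + 1) = (i + t) + 1 := by omega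
        rw [he]
        exact hstep (i + t) (by omega)
      · show c (i + (j - i)) = c (i + 0)
        have he : i + (j - i) = j := by omega
        have he0 : i + 0 = i := by omega
        rw [he, he0, hcij]
    have hd2 : d ∣ (L - (j - i)) := by
      refine IH (L - (j - i)) (by omega) (fun t => if t ≤ i then c t else c (t + (j - i))) (by omega) ?_ ?_
      · intro t ht
        show (if t + 1 ≤ i then c (t + 1) else c (t + 1 + (j - i))) ∈
          E' (if t ≤ i then c t else c (t + (j - i)))
        rcases Nat.lt_trichotomy t i with h1 | h1 | h1
        · rw [if_pos (by omega : t ≤ i), if_pos (by omega : t + 1 ≤ i)]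
          exact hstep t (by omega)
        · rw [if_pos (by omega : t ≤ i), if_neg (by omega : ¬ t + 1 ≤ i)]
          have he : t + 1 + (j - i) = j + 1 := by omega
          have h2 : c t = c j := by rw [h1, hcij]
          rw [he, h2]
          exact hstep j (by omega)
        · rw [if_neg (by omega : ¬ t ≤ i), if_neg (by omega : ¬ t + 1 ≤ i)]
          have he : t + 1 + (j - i) = (t + (j - i)) + 1 := by omega
          rw [he]
          exact hstep (t + (j - i)) (by omega)
      · show (if L - (j - i) ≤ i then c (L - (j - i)) else c (L - (j - i) + (j - i))) =
          (if 0 ≤ i then c 0 else c (0 + (j - i)))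
        rw [if_neg (by omega : ¬ L - (j - i) ≤ i), if_pos (Nat.zero_le i)]
        have he : L - (j - i) + (j - i) = L := by omega
        rw [he, hclose]
    have : L = (j - i) + (L - (j - i)) := by omega
    rw [this]
    exact Nat.dvd_add hd1 hd2

end RCwalk

section RCk1

open List

lemma RC_k1 {V : Type} [Fintype V] [DecidableEq V] [Nonempty V] (E : V → Multiset V)
    (hAGW : IsAGW E 1) (hc : 1 < Fintype.card V) : False := by
  classical
  -- the unique out-neighbor function
  have hone : ∀ v, ∃ a, E v = {a} := fun v => Multiset.card_eq_one.mp (hAGW.1 v)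
  set f : V → V := fun v => (hone v).choose with hf
  have hEf : ∀ v, E v = {f v} := fun v => (hone v).choose_spec
  have hmem : ∀ {v b : V}, b ∈ E v ↔ b = f v := by
    intro v b
    rw [hEf v, Multiset.mem_singleton]
  -- reachability = iteration
  have hreach : ∀ u v : V, ∃ m, f^[m] u = v := by
    intro u v
    have h := hAGW.2.1 u v
    induction h with
    | refl => exact ⟨0, rfl⟩
    | tail _ hbc ih =>
      obtain ⟨m, hm⟩ := ih
      refine ⟨m + 1, ?_⟩
      rw [Function.iterate_succ_apply', hm]
      exact (hmem.mp hbc).symm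
  -- a periodic point
  obtain ⟨i, j, hij, hfij⟩ :=
    Finite.exists_ne_map_eq_of_infinite (fun n : ℕ => f^[n] (Classical.arbitrary V))
  -- wlog i < j
  have hper : ∃ u : V, ∃ p, 0 < p ∧ f^[p] u = u := by
    rcases Nat.lt_or_ge i j with hlt | hge
    · refine ⟨f^[i] (Classical.arbitrary V), j - i, by omega, ?_⟩
      rw [← Function.iterate_add_apply]
      have he : j - i + i = j := by omega
      rw [he]
      exact hfij.symm
    · have hlt : j < i := by omega
      refine ⟨f^[j] (Classical.arbitrary V), i - j, by omega, ?_⟩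
      rw [← Function.iterate_add_apply]
      have he : i - j + j = i := by omega
      rw [he]
      exact hfij
  obtain ⟨u, hP⟩ := hper
  set m := Nat.find hP with hm
  have hm0 : 0 < m := (Nat.find_spec hP).1
  have hmu : f^[m] u = u := (Nat.find_spec hP).2
  -- minimal period divides every period
  have hdiv : ∀ L, f^[L] u = u → m ∣ L := by
    intro L hLu
    have hmq : ∀ q : ℕ, f^[m * q] u = u := by
      intro q
      induction q with
      | zero => simp
      | succ q ih =>
        rw [Nat.mul_succ, Function.iterate_add_apply, hmu, ih]
    rcases Nat.eq_zero_or_pos (L % m) with h0 | hpos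
    · exact Nat.dvd_of_mod_eq_zero h0
    · exfalso
      have hrem : f^[L % m] u = u := by
        calc f^[L % m] u = f^[L % m] (f^[m * (L / m)] u) := by rw [hmq]
          _ = f^[L % m + m * (L / m)] u := (Function.iterate_add_apply f _ _ u).symm
          _ = f^[L] u := by rw [Nat.mod_add_div]
          _ = u := hLu
      exact Nat.find_min hP (Nat.mod_lt L hm0) ⟨hpos, hrem⟩
  -- every cycle has length divisible by m
  have hcyc : ∀ l : List V, IsCycle E l → m ∣ l.length := by
    intro l hl
    obtain ⟨hne, hnd, hch, hcl⟩ := hl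
    have hlpos : 0 < l.length := List.length_pos_iff.mpr hne
    set u' := l.head hne with hu'
    have hgl : ∀ i (hi : i < l.length), l.get ⟨i, hi⟩ = f^[i] u' := by
      intro i
      induction i with
      | zero => intro hi; rw [List.get_mk_zero]; rfl
      | succ i ih =>
        intro hi
        have hch' := List.isChain_iff_getElem.mp hch i (by omega)
        have := hmem.mp hch'
        simp only [List.get_eq_getElem] at ih ⊢
        rw [this, ih (by omega)]
        exact (Function.iterate_succ_apply' f i u').symm
    have hclosing : f^[l.length] u' = u' := by
      have h1 : l.getLast hne = f^[l.length - 1] u' := by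
        have hg := hgl (l.length - 1) (by omega)
        simp only [List.get_eq_getElem] at hg
        rw [List.getLast_eq_getElem, hg]
      have h2 := hmem.mp hcl
      rw [h1] at h2
      have h3 : f (f^[l.length - 1] u') = f^[l.length - 1 + 1] u' :=
        (Function.iterate_succ_apply' f (l.length - 1) u').symm
      have he : l.length - 1 + 1 = l.length := by omega
      rw [h3, he] at h2
      exact h2.symm
    -- transfer the period to u
    obtain ⟨t, ht⟩ := hreach u u'
    obtain ⟨r, hr⟩ := hreach u' u
    have hLu : f^[l.length] u = u := by
      have h3 : f^[l.length] u = f^[r] (f^[l.length] u') := by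
        rw [← hr, ← Function.iterate_add_apply, ← Function.iterate_add_apply]
        congr 1
        omega
      rw [h3, hclosing, hr]
    exact hdiv _ hLu
  -- gcd condition forces m = 1, hence a fixed point, hence card = 1
  have hm1 : m = 1 := hAGW.2.2 m hcyc
  have hfix : f u = u := by
    have := hmu
    rw [hm1] at this
    simpa using this
  obtain ⟨x, hx⟩ := Fintype.exists_ne_of_one_lt_card hc u
  obtain ⟨s, hs⟩ := hreach u x
  rw [Function.iterate_fixed hfix s] at hs
  exact hx hs.symm

end RCk1

/-- If every AGW graph with at least two vertices and outdegree `k ≥ 2`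
admits a coloring with a stable pair of distinct states, then every AGW graph has a
synchronizing coloring. -/
theorem stable_pair_implies_road_coloring
    (h : ∀ (V : Type) [Fintype V] [DecidableEq V] [Nonempty V]
        (E : V → Multiset V) (k : ℕ), IsAGW E k → 1 < Fintype.card V → 2 ≤ k →
        ∃ δ : Fin k → V → V, IsColoring E δ ∧
          ∃ p q : V, p ≠ q ∧ SyncPair δ p q ∧ Stable δ p q) :
    ∀ (V : Type) [Fintype V] [DecidableEq V] [Nonempty V]
      (E : V → Multiset V) (k : ℕ), IsAGW E k →
      ∃ δ : Fin k → V → V, IsColoring E δ ∧ ∃ s : List (Fin k), IsSynchronizingWord δ s := by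
  suffices H : ∀ n : ℕ, ∀ (V : Type) [Fintype V] [DecidableEq V] [Nonempty V]
      (E : V → Multiset V) (k : ℕ), Fintype.card V ≤ n → IsAGW E k →
      ∃ δ : Fin k → V → V, IsColoring E δ ∧ ∃ s : List (Fin k), IsSynchronizingWord δ s by
    intro V _ _ _ E k hAGW
    exact H (Fintype.card V) V E k le_rfl hAGW
  intro n
  induction n with
  | zero =>
    intro V _ _ _ E k hle _
    have := Fintype.card_pos (α := V)
    omega
  | succ n IH =>
    intro V _ _ _ E k hle hAGW
    classical
    by_cases hcard : Fintype.card V ≤ 1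
    · -- single vertex: identity coloring, empty word
      have hsub : Subsingleton V := Fintype.card_le_one_iff_subsingleton.mp hcard
      refine ⟨fun _ v => v, ?_, [], Classical.arbitrary V, fun v => Subsingleton.elim _ _⟩
      intro v
      have h1 : E v = Multiset.replicate (Multiset.card (E v)) v :=
        Multiset.eq_replicate_card.mpr (fun b _ => Subsingleton.elim b v)
      rw [h1, hAGW.1 v, Multiset.map_const']
      congr 1
      rw [← Finset.card_def, Finset.card_univ, Fintype.card_fin]
    · push_neg at hcard
      -- at least two vertices forces k ≥ 2
      have hk2 : 2 ≤ k := by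
        rcases Nat.lt_or_ge k 2 with hk | hk
        · exfalso
          interval_cases k
          · obtain ⟨a, b, hab⟩ := Fintype.exists_pair_of_one_lt_card hcard
            have hE : ∀ v : V, E v = 0 := fun v => Multiset.card_eq_zero.mp (hAGW.1 v)
            have hab' : a = b := by
              induction hAGW.2.1 a b with
              | refl => rfl
              | tail _ hbc _ =>
                rw [hE] at hbc
                exact absurd hbc (Multiset.notMem_zero _)
            exact hab hab'
          · exact RC_k1 E hAGW hcard
        · exact hk
      obtain ⟨δ, hδ, p₀, q₀, hp0q0, _, hst⟩ := h V E k hAGW hcard hk2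
      -- the stability congruence
      let st : Setoid V := ⟨Stable δ,
        ⟨fun p => RC_stable_refl δ p, fun hab => RC_stable_symm hab,
          fun hab hbc => RC_stable_trans hab hbc⟩⟩
      letI : Fintype (Quotient st) := @Quotient.fintype V _ st (fun _ _ => Classical.dec _)
      letI : DecidableEq (Quotient st) := Classical.decEq _
      haveI : Nonempty (Quotient st) := ⟨Quotient.mk st (Classical.arbitrary V)⟩
      have hmksurj : Function.Surjective (Quotient.mk st) :=
        fun q => Quotient.inductionOn q (fun v => ⟨v, rfl⟩)
      have hlt : Fintype.card (Quotient st) < Fintype.card V := by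
        refine Fintype.card_lt_of_surjective_not_injective (Quotient.mk st) hmksurj ?_
        intro hinj
        exact hp0q0 (hinj (Quotient.sound hst))
      -- quotient coloring and quotient graph
      have hresp : ∀ (a : Fin k) (p q : V), st.r p q → st.r (δ a p) (δ a q) :=
        fun a p q hpq => RC_stable_step hpq a
      let δq : Fin k → Quotient st → Quotient st :=
        fun a => Quotient.map (δ a) (fun p q hpq => hresp a p q hpq)
      have hmk : ∀ (a : Fin k) (v : V),
          δq a (Quotient.mk st v) = Quotient.mk st (δ a v) := fun a v => rfl
      let Eq' : Quotient st → Multiset (Quotient st) :=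
        fun C => Multiset.map (fun a => δq a C) Finset.univ.val
      -- project an edge
      have hedge : ∀ a b : V, b ∈ E a → Quotient.mk st b ∈ Eq' (Quotient.mk st a) := by
        intro a b hab
        rw [← hδ a] at hab
        obtain ⟨a', _, ha'⟩ := Multiset.mem_map.mp hab
        exact Multiset.mem_map.mpr ⟨a', by simp, by rw [hmk, ha']⟩
      have hAGWq : IsAGW Eq' k := by
        refine ⟨?_, ?_, ?_⟩
        · intro C
          simp [Eq', Finset.card_def]
        · intro C D
          refine Quotient.inductionOn₂ C D (fun u v => ?_)
          exact Relation.ReflTransGen.lift (p := fun C D => D ∈ Eq' C) (Quotient.mk st)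
            (fun a b hab => hedge a b hab) u v (hAGW.2.1 u v)
        · intro d hd
          refine hAGW.2.2 d ?_
          intro l hl
          obtain ⟨hne, hnd, hch, hcl⟩ := hl
          have hL : 0 < l.length := List.length_pos_iff.mpr hne
          refine RC_walk_dvd Eq' d hd l.length
            (fun i => Quotient.mk st (l.get ⟨i % l.length, Nat.mod_lt i hL⟩)) hL ?_ ?_
          · intro i hi
            show Quotient.mk st (l.get ⟨(i + 1) % l.length, Nat.mod_lt (i+1) hL⟩) ∈
              Eq' (Quotient.mk st (l.get ⟨i % l.length, Nat.mod_lt i hL⟩))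
            have hiL : (⟨i % l.length, Nat.mod_lt i hL⟩ : Fin l.length) = ⟨i, hi⟩ :=
              Fin.ext (Nat.mod_eq_of_lt hi)
            by_cases h1 : i + 1 < l.length
            · have h1L : (⟨(i + 1) % l.length, Nat.mod_lt (i+1) hL⟩ : Fin l.length)
                  = ⟨i + 1, h1⟩ := Fin.ext (Nat.mod_eq_of_lt h1)
              rw [hiL, h1L]
              have hch' := List.isChain_iff_getElem.mp hch i (by omega)
              exact hedge _ _ hch'
            · have h2 : i + 1 = l.length := by omega
              have h2L : (⟨(i + 1) % l.length, Nat.mod_lt (i+1) hL⟩ : Fin l.length)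
                  = ⟨0, hL⟩ := Fin.ext (show (i + 1) % l.length = 0 by rw [h2, Nat.mod_self])
              have h3L : (⟨i % l.length, Nat.mod_lt i hL⟩ : Fin l.length)
                  = ⟨l.length - 1, by omega⟩ := Fin.ext (show i % l.length = l.length - 1 by rw [Nat.mod_eq_of_lt hi]; omega)
              rw [h2L, h3L, List.get_mk_zero,
                show l.get ⟨l.length - 1, by omega⟩ = l.getLast hne from (List.getLast_eq_getElem hne).symm]
              exact hedge _ _ hcl
          · show Quotient.mk st (l.get ⟨l.length % l.length, Nat.mod_lt l.length hL⟩)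
              = Quotient.mk st (l.get ⟨0 % l.length, Nat.mod_lt 0 hL⟩)
            have he : (⟨l.length % l.length, Nat.mod_lt l.length hL⟩ : Fin l.length)
                = ⟨0 % l.length, Nat.mod_lt 0 hL⟩ := Fin.ext (by simp)
            rw [he]
      -- induction hypothesis on the quotient
      obtain ⟨ξq, hξq, sq, hsq⟩ := IH (Quotient st) Eq' k (by omega) hAGWq
      -- per-class letter permutations matching δq with ξq
      have hcol2 : ∀ C, Multiset.map (fun a => ξq a C) Finset.univ.val
          = Multiset.map (fun a => δq a C) Finset.univ.val := fun C => hξq C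
      choose σ hσ using fun C => RC_exists_perm _ _ (hcol2 C)
      -- the lifted coloring
      let ξ : Fin k → V → V := fun a v => δ (σ (Quotient.mk st v) a) v
      have hξcol : IsColoring E ξ := by
        intro v
        have := RC_map_perm (fun a => δ a v) (σ (Quotient.mk st v))
        calc Multiset.map (fun a => ξ a v) Finset.univ.val
            = Multiset.map (fun a => δ a v) Finset.univ.val := this
          _ = E v := hδ v
      have hcompat : ∀ (a : Fin k) (v : V),
          Quotient.mk st (ξ a v) = ξq a (Quotient.mk st v) := by
        intro a v
        show Quotient.mk st (δ (σ (Quotient.mk st v) a) v) = _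
        rw [hσ]
        rfl
      have hword : ∀ (u : List (Fin k)) (v : V),
          Quotient.mk st (wordMap ξ u v) = wordMap ξq u (Quotient.mk st v) := by
        intro u
        induction u with
        | nil => intro v; rfl
        | cons a u ih =>
          intro v
          rw [RC_wordMap_cons, RC_wordMap_cons, ih, hcompat]
      -- simulate δ-words by ξ-words within a class
      have hsim : ∀ (s : List (Fin k)) (C : Quotient st), ∃ u : List (Fin k),
          ∀ v : V, Quotient.mk st v = C → wordMap ξ u v = wordMap δ s v := by
        intro s
        induction s with
        | nil => intro C; exact ⟨[], fun v _ => rfl⟩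
        | cons b s ih =>
          intro C
          obtain ⟨u, hu⟩ := ih (δq b C)
          refine ⟨(σ C).symm b :: u, fun v hv => ?_⟩
          rw [RC_wordMap_cons, RC_wordMap_cons]
          have h1 : ξ ((σ C).symm b) v = δ b v := by
            show δ (σ (Quotient.mk st v) ((σ C).symm b)) v = δ b v
            rw [hv, Equiv.apply_symm_apply]
          rw [h1]
          refine hu (δ b v) ?_
          rw [← hv]
          rfl
      -- states in the same class are synchronizable under ξ
      have hsync : ∀ p q : V, Quotient.mk st p = Quotient.mk st q → SyncPair ξ p q := by
        intro p q hpq'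
        have hstab : Stable δ p q := Quotient.exact hpq'
        obtain ⟨s, hs⟩ := hstab []
        obtain ⟨u, hu⟩ := hsim s (Quotient.mk st p)
        exact ⟨u, by rw [hu p rfl, hu q hpq'.symm]; exact hs⟩
      -- merging within a class
      have hmerge : ∀ m : ℕ, ∀ u : List (Fin k),
          (∀ x y : V, Quotient.mk st (wordMap ξ u x) = Quotient.mk st (wordMap ξ u y)) →
          (Finset.univ.image (wordMap ξ u)).card ≤ m →
          ∃ s : List (Fin k), IsSynchronizingWord ξ s := by
        intro m
        induction m with
        | zero =>
          intro u _ hc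
          have h0 : 0 < (Finset.univ.image (wordMap ξ u)).card :=
            Finset.card_pos.mpr (Finset.univ_nonempty.image _)
          omega
        | succ m ih =>
          intro u hcls hc
          by_cases h1 : (Finset.univ.image (wordMap ξ u)).card ≤ 1
          · have h0 : 0 < (Finset.univ.image (wordMap ξ u)).card :=
              Finset.card_pos.mpr (Finset.univ_nonempty.image _)
            obtain ⟨q0, hq0⟩ := Finset.card_eq_one.mp (le_antisymm h1 h0)
            refine ⟨u, q0, fun v => ?_⟩
            have hv : wordMap ξ u v ∈ Finset.univ.image (wordMap ξ u) :=
              Finset.mem_image_of_mem _ (Finset.mem_univ v)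
            rw [hq0] at hv
            exact Finset.mem_singleton.mp hv
          · push_neg at h1
            obtain ⟨x, hx, y, hy, hxy⟩ := Finset.one_lt_card.mp h1
            obtain ⟨px, _, hpx⟩ := Finset.mem_image.mp hx
            obtain ⟨py, _, hpy⟩ := Finset.mem_image.mp hy
            have hxyc : SyncPair ξ x y := by
              refine hsync x y ?_
              rw [← hpx, ← hpy]
              exact hcls px py
            obtain ⟨t, ht⟩ := hxyc
            have himg : Finset.univ.image (wordMap ξ (u ++ t))
                = (Finset.univ.image (wordMap ξ u)).image (wordMap ξ t) := by
              rw [Finset.image_image]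
              apply Finset.image_congr
              intro v _
              exact RC_wordMap_append ξ u t v
            refine ih (u ++ t) ?_ ?_
            · intro a b
              rw [RC_wordMap_append, RC_wordMap_append, hword t, hword t, hcls a b]
            · have hle2 : ((Finset.univ.image (wordMap ξ u)).image (wordMap ξ t)).card
                  ≤ (Finset.univ.image (wordMap ξ u)).card := Finset.card_image_le
              have hne2 : ((Finset.univ.image (wordMap ξ u)).image (wordMap ξ t)).card
                  ≠ (Finset.univ.image (wordMap ξ u)).card := by
                intro he
                have hinj := Finset.injOn_of_card_image_eq he
                exact hxy (hinj hx hy (by rw [← hpx, ← hpy, ← RC_wordMap_append,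
                  ← RC_wordMap_append] at ht ⊢; exact ht))
              rw [himg]
              omega
      -- conclude
      obtain ⟨Cq, hCq⟩ := hsq
      have hcls0 : ∀ x y : V,
          Quotient.mk st (wordMap ξ sq x) = Quotient.mk st (wordMap ξ sq y) := by
        intro x y
        rw [hword, hword, hCq, hCq]
      obtain ⟨s, hs⟩ := hmerge (Finset.univ.image (wordMap ξ sq)).card sq hcls0 le_rfl
      exact ⟨ξ, hξcol, s, hs⟩
end

section
/- For any coloring of an AGW graph and any weight function w, there exists a partition of the vertex set V into F-maximal sets; in particular all parts of this partition have the same weight w*. -/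
set_option linter.unusedSectionVars false
section AuxRC

variable {V : Type} [Fintype V] [DecidableEq V] {k : ℕ}

/-- Preimage of a finset under a map. -/
def preRC (f : V → V) (Y : Finset V) : Finset V := Finset.univ.filter (fun x => f x ∈ Y)

lemma mem_preRC {f : V → V} {Y : Finset V} {x : V} : x ∈ preRC f Y ↔ f x ∈ Y := by
  simp [preRC]

lemma preRC_mono (f : V → V) {Y Z : Finset V} (h : Y ⊆ Z) : preRC f Y ⊆ preRC f Z :=
  fun x hx => mem_preRC.mpr (h (mem_preRC.mp hx))

lemma wordMap_append (δ : Fin k → V → V) (s t : List (Fin k)) (v : V) :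
    wordMap δ (s ++ t) v = wordMap δ t (wordMap δ s v) := by
  simp [wordMap, List.foldl_append]

lemma preRC_nil (δ : Fin k → V → V) (Y : Finset V) : preRC (wordMap δ []) Y = Y := by
  ext x; simp [mem_preRC, wordMap]

lemma preRC_cons (δ : Fin k → V → V) (a : Fin k) (s : List (Fin k)) (Y : Finset V) :
    preRC (wordMap δ (a :: s)) Y = preRC (δ a) (preRC (wordMap δ s) Y) := by
  ext x; simp [mem_preRC, wordMap]

lemma preRC_append (δ : Fin k → V → V) (s t : List (Fin k)) (Y : Finset V) :
    preRC (wordMap δ (s ++ t)) Y = preRC (wordMap δ s) (preRC (wordMap δ t) Y) := by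
  ext x; simp [mem_preRC, wordMap_append]

lemma isSyncSet_iff (δ : Fin k → V → V) (D : Finset V) :
    IsSyncSet δ D ↔ D.Nonempty ∧ ∃ s q, ∀ x ∈ D, wordMap δ s x = q := by
  constructor
  · rintro ⟨s, hs⟩
    rcases Finset.card_eq_one.mp hs with ⟨q, hq⟩
    refine ⟨Finset.image_nonempty.mp (hq ▸ Finset.singleton_nonempty q), s, q, fun x hx => ?_⟩
    have := Finset.mem_image_of_mem (wordMap δ s) hx
    rw [hq, Finset.mem_singleton] at this
    exact this
  · rintro ⟨⟨v, hv⟩, s, q, h⟩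
    refine ⟨s, ?_⟩
    have : D.image (wordMap δ s) = {q} := by
      apply Finset.Subset.antisymm
      · intro y hy
        obtain ⟨x, hx, rfl⟩ := Finset.mem_image.mp hy
        simp [h x hx]
      · intro y hy
        rw [Finset.mem_singleton] at hy
        exact hy ▸ (h v hv ▸ Finset.mem_image_of_mem _ hv)
    rw [this]; rfl

lemma isSyncSet_singleton (δ : Fin k → V → V) (v : V) : IsSyncSet δ {v} :=
  ⟨[], by simp⟩

lemma sync_preRC (δ : Fin k → V → V) {Y : Finset V} (hY : IsSyncSet δ Y) (s : List (Fin k))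
    (hne : (preRC (wordMap δ s) Y).Nonempty) : IsSyncSet δ (preRC (wordMap δ s) Y) := by
  rw [isSyncSet_iff] at hY ⊢
  obtain ⟨-, t, q, ht⟩ := hY
  exact ⟨hne, s ++ t, q, fun x hx => by
    rw [wordMap_append]; exact ht _ (mem_preRC.mp hx)⟩

lemma card_filter_mem (M : Multiset V) (Y : Finset V) :
    Multiset.card (M.filter (· ∈ Y)) = ∑ q ∈ Y, M.count q := by
  induction M using Multiset.induction with
  | empty => simp
  | cons a M ih =>
    simp only [Multiset.filter_cons, Multiset.count_cons, Finset.sum_add_distrib, ih,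
      Multiset.card_add]
    rw [Finset.sum_ite_eq' Y a (fun _ => 1)]
    by_cases h : a ∈ Y <;> simp [h]
    omega

lemma sum_preRC_letter (E : V → Multiset V) (δ : Fin k → V → V) (hδ : IsColoring E δ)
    (w : V → ℕ) (hw : IsWeight E k w) (Y : Finset V) :
    ∑ a : Fin k, weight w (preRC (δ a) Y) = k * weight w Y := by
  have key : ∀ x : V, (Finset.univ.filter (fun a : Fin k => δ a x ∈ Y)).card
      = ∑ q ∈ Y, (E x).count q := by
    intro x
    rw [← hδ x, ← card_filter_mem, Multiset.filter_map, Multiset.card_map]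
    rw [Finset.card_def, Finset.filter_val]
    exact congrArg Multiset.card (Multiset.filter_congr (fun a _ => Iff.rfl))
  calc ∑ a : Fin k, weight w (preRC (δ a) Y)
      = ∑ a : Fin k, ∑ x : V, if δ a x ∈ Y then w x else 0 := by
        simp [weight, preRC, Finset.sum_filter]
    _ = ∑ x : V, ∑ a : Fin k, if δ a x ∈ Y then w x else 0 := Finset.sum_comm
    _ = ∑ x : V, w x * ∑ q ∈ Y, (E x).count q := by
        refine Finset.sum_congr rfl (fun x _ => ?_)
        rw [← key x, ← Finset.sum_filter, Finset.sum_const, smul_eq_mul, mul_comm]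
    _ = ∑ q ∈ Y, ∑ x : V, w x * (E x).count q := by
        rw [Finset.sum_comm]
        simp [Finset.mul_sum]
    _ = ∑ q ∈ Y, k * w q := by
        refine Finset.sum_congr rfl (fun q _ => hw.2 q)
    _ = k * weight w Y := by rw [weight, Finset.mul_sum]

lemma bddAbove_weights (δ : Fin k → V → V) (w : V → ℕ) :
    BddAbove {m | ∃ D : Finset V, IsSyncSet δ D ∧ weight w D = m} := by
  refine ⟨∑ v, w v, ?_⟩
  rintro m ⟨D, -, rfl⟩
  exact Finset.sum_le_sum_of_subset (Finset.subset_univ D)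

lemma weight_le_wstar (δ : Fin k → V → V) (w : V → ℕ) (D : Finset V) (hD : IsSyncSet δ D) :
    weight w D ≤ wstar δ w :=
  le_csSup (bddAbove_weights δ w) ⟨D, hD, rfl⟩

lemma exists_wstar [Nonempty V] (δ : Fin k → V → V) (w : V → ℕ) :
    ∃ D : Finset V, IsSyncSet δ D ∧ weight w D = wstar δ w := by
  have := Nat.sSup_mem (s := {m | ∃ D : Finset V, IsSyncSet δ D ∧ weight w D = m})
    ⟨weight w {Classical.arbitrary V}, {Classical.arbitrary V},
      isSyncSet_singleton δ _, rfl⟩ (bddAbove_weights δ w)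
  exact this

lemma one_le_wstar [Nonempty V] (δ : Fin k → V → V) {w : V → ℕ} (hw1 : ∀ v, 1 ≤ w v) :
    1 ≤ wstar δ w := by
  have h := weight_le_wstar δ w {Classical.arbitrary V} (isSyncSet_singleton δ _)
  have : 1 ≤ weight w {Classical.arbitrary V} := by
    simpa [weight] using hw1 (Classical.arbitrary V)
  omega

lemma nonempty_of_weight [Nonempty V] {w : V → ℕ} {D : Finset V} (h : 1 ≤ weight w D) :
    D.Nonempty := by
  rcases D.eq_empty_or_nonempty with rfl | hne
  · simp [weight] at h
  · exact hne

lemma key_letter [Nonempty V] (E : V → Multiset V) (δ : Fin k → V → V) (hδ : IsColoring E δ)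
    (w : V → ℕ) (hw : IsWeight E k w) {Y : Finset V}
    (hY : IsSyncSet δ Y) (hwY : weight w Y = wstar δ w) (a : Fin k) :
    IsSyncSet δ (preRC (δ a) Y) ∧ weight w (preRC (δ a) Y) = wstar δ w := by
  have hple : ∀ b : Fin k, weight w (preRC (δ b) Y) ≤ wstar δ w := by
    intro b
    rcases (preRC (δ b) Y).eq_empty_or_nonempty with h | h
    · simp [h, weight]
    · have : preRC (δ b) Y = preRC (wordMap δ [b]) Y := by
        rw [preRC_cons, preRC_nil]
      rw [this] at h ⊢
      exact weight_le_wstar δ w _ (sync_preRC δ hY [b] h)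
  have hsum := sum_preRC_letter E δ hδ w hw Y
  rw [hwY] at hsum
  have heq : ∀ b, weight w (preRC (δ b) Y) = wstar δ w := by
    by_contra hcon
    push_neg at hcon
    obtain ⟨b, hb⟩ := hcon
    have hlt : weight w (preRC (δ b) Y) < wstar δ w := lt_of_le_of_ne (hple b) hb
    have hstrict : ∑ a : Fin k, weight w (preRC (δ a) Y) < ∑ _a : Fin k, wstar δ w :=
      Finset.sum_lt_sum (fun i _ => hple i) ⟨b, Finset.mem_univ b, hlt⟩
    rw [hsum, Finset.sum_const, Finset.card_univ, Fintype.card_fin, smul_eq_mul] at hstrict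
    omega
  refine ⟨?_, heq a⟩
  have hne : (preRC (δ a) Y).Nonempty :=
    nonempty_of_weight (by rw [heq a]; exact one_le_wstar δ hw.1)
  have : preRC (δ a) Y = preRC (wordMap δ [a]) Y := by rw [preRC_cons, preRC_nil]
  rw [this] at hne ⊢
  exact sync_preRC δ hY [a] hne

lemma key_word [Nonempty V] (E : V → Multiset V) (δ : Fin k → V → V) (hδ : IsColoring E δ)
    (w : V → ℕ) (hw : IsWeight E k w) {Y : Finset V}
    (hY : IsSyncSet δ Y) (hwY : weight w Y = wstar δ w) (s : List (Fin k)) :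
    IsSyncSet δ (preRC (wordMap δ s) Y) ∧ weight w (preRC (wordMap δ s) Y) = wstar δ w := by
  induction s with
  | nil => rw [preRC_nil]; exact ⟨hY, hwY⟩
  | cons a s ih =>
    rw [preRC_cons]
    exact key_letter E δ hδ w hw ih.1 ih.2 a

lemma reach (E : V → Multiset V) (δ : Fin k → V → V) (hδ : IsColoring E δ)
    (hconn : ∀ u v : V, Relation.ReflTransGen (fun a b => b ∈ E a) u v) (x y : V) :
    ∃ s : List (Fin k), wordMap δ s x = y := by
  induction (hconn x y) with
  | refl => exact ⟨[], rfl⟩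
  | tail _ hbc ih =>
    obtain ⟨s, hs⟩ := ih
    rename_i b c _
    rw [← hδ b] at hbc
    obtain ⟨a, -, ha⟩ := Multiset.mem_map.mp hbc
    exact ⟨s ++ [a], by rw [wordMap_append, hs]; simpa [wordMap] using ha⟩

end AuxRC

/-- For any coloring of an AGW graph and any weight function, there is a
partition of the vertex set into F-maximal sets; all parts have the same weight `w*`. -/
theorem exists_partition_into_F_maximal_sets {V : Type} [Fintype V] [DecidableEq V]
    [Nonempty V] (E : V → Multiset V) (k : ℕ) (hAGW : IsAGW E k)
    (δ : Fin k → V → V) (hδ : IsColoring E δ) (w : V → ℕ) (hw : IsWeight E k w) :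
    ∃ P : Finset (Finset V),
      (∀ v : V, ∃! D : Finset V, D ∈ P ∧ v ∈ D) ∧
      (∀ D ∈ P, IsFMaximal δ w D) ∧
      ∃ ws : ℕ, ∀ D ∈ P, weight w D = ws := by
  classical
  obtain ⟨hcard, hconn, hgcd⟩ := hAGW
  set W := wstar δ w with hWdef
  have hW1 : 1 ≤ W := one_le_wstar δ hw.1
  -- the number of full-weight fibers of a word
  set N : List (Fin k) → ℕ := fun u =>
    (Finset.univ.filter (fun r : V => weight w (preRC (wordMap δ u) {r}) = W)).card with hN
  have hbdd : BddAbove (Set.range N) := by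
    refine ⟨Fintype.card V, ?_⟩
    rintro m ⟨u, rfl⟩
    exact le_trans (Finset.card_filter_le _ _) (le_of_eq (Finset.card_univ))
  have hrne : (Set.range N).Nonempty := ⟨N [], [], rfl⟩
  obtain ⟨u, hu⟩ : ∃ u, N u = sSup (Set.range N) := Nat.sSup_mem hrne hbdd
  have humax : ∀ u', N u' ≤ N u := fun u' => hu ▸ le_csSup hbdd ⟨u', rfl⟩
  -- every nonempty fiber of u has weight W
  have hfull : ∀ r : V, (preRC (wordMap δ u) {r}).Nonempty →
      weight w (preRC (wordMap δ u) {r}) = W := by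
    intro r hner
    by_contra hbad
    obtain ⟨y, hy⟩ := hner
    obtain ⟨Y, hYsync, hYw⟩ := exists_wstar δ w
    obtain ⟨-, t, q, ht⟩ := (isSyncSet_iff δ Y).mp hYsync
    obtain ⟨z, hz⟩ := reach E δ hδ hconn q y
    set s := t ++ z with hs
    have hsub : Y ⊆ preRC (wordMap δ s) {y} := by
      intro x hx
      rw [mem_preRC, hs, wordMap_append, ht x hx, hz]
      exact Finset.mem_singleton_self y
    have h1 : W ≤ weight w (preRC (wordMap δ (s ++ u)) {r}) := by
      rw [preRC_append]
      calc W = weight w Y := hYw.symm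
        _ ≤ weight w (preRC (wordMap δ s) {y}) := Finset.sum_le_sum_of_subset hsub
        _ ≤ weight w (preRC (wordMap δ s) (preRC (wordMap δ u) {r})) :=
            Finset.sum_le_sum_of_subset (preRC_mono _ (Finset.singleton_subset_iff.mpr hy))
    have hne2 : (preRC (wordMap δ (s ++ u)) {r}).Nonempty := nonempty_of_weight (le_trans hW1 h1)
    have h2 : weight w (preRC (wordMap δ (s ++ u)) {r}) ≤ W :=
      weight_le_wstar δ w _ (sync_preRC δ (isSyncSet_singleton δ r) (s ++ u) hne2)
    -- full fibers of u stay full for s ++ u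
    have hmono : ∀ r' : V, weight w (preRC (wordMap δ u) {r'}) = W →
        weight w (preRC (wordMap δ (s ++ u)) {r'}) = W := by
      intro r' hr'
      rw [preRC_append]
      have hne3 : (preRC (wordMap δ u) {r'}).Nonempty := nonempty_of_weight (hr' ▸ hW1)
      have hsync3 : IsSyncSet δ (preRC (wordMap δ u) {r'}) :=
        sync_preRC δ (isSyncSet_singleton δ r') u hne3
      exact (key_word E δ hδ w hw hsync3 hr' s).2
    have hsubset : insert r (Finset.univ.filter
          (fun r' : V => weight w (preRC (wordMap δ u) {r'}) = W)) ⊆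
        Finset.univ.filter (fun r' : V => weight w (preRC (wordMap δ (s ++ u)) {r'}) = W) := by
      intro r' hr'
      rcases Finset.mem_insert.mp hr' with rfl | hr'
      · exact Finset.mem_filter.mpr ⟨Finset.mem_univ _, le_antisymm h2 h1⟩
      · exact Finset.mem_filter.mpr ⟨Finset.mem_univ _, hmono r' (Finset.mem_filter.mp hr').2⟩
    have hcardlt : N u + 1 ≤ N (s ++ u) := by
      have hnotmem : r ∉ Finset.univ.filter
          (fun r' : V => weight w (preRC (wordMap δ u) {r'}) = W) := by
        simp only [Finset.mem_filter, Finset.mem_univ, true_and]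
        exact hbad
      calc N u + 1 = (insert r (Finset.univ.filter
            (fun r' : V => weight w (preRC (wordMap δ u) {r'}) = W))).card := by
            rw [Finset.card_insert_of_notMem hnotmem]
        _ ≤ N (s ++ u) := Finset.card_le_card hsubset
    have := humax (s ++ u)
    omega
  -- build the partition from the fibers of u
  refine ⟨Finset.univ.image (fun v => preRC (wordMap δ u) {wordMap δ u v}), ?_, ?_, W, ?_⟩
  · intro v
    refine ⟨preRC (wordMap δ u) {wordMap δ u v},
      ⟨Finset.mem_image_of_mem _ (Finset.mem_univ v), mem_preRC.mpr (Finset.mem_singleton_self _)⟩,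
      ?_⟩
    rintro D ⟨hD, hvD⟩
    obtain ⟨v', -, rfl⟩ := Finset.mem_image.mp hD
    have : wordMap δ u v = wordMap δ u v' := Finset.mem_singleton.mp (mem_preRC.mp hvD)
    rw [this]
  · intro D hD
    obtain ⟨v', -, rfl⟩ := Finset.mem_image.mp hD
    have hnev' : (preRC (wordMap δ u) {wordMap δ u v'}).Nonempty :=
      ⟨v', mem_preRC.mpr (Finset.mem_singleton_self _)⟩
    have hwD := hfull (wordMap δ u v') hnev'
    refine ⟨sync_preRC δ (isSyncSet_singleton δ _) u hnev', ?_⟩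
    intro D' hD'
    rw [hwD]
    exact weight_le_wstar δ w D' hD'
  · intro D hD
    obtain ⟨v', -, rfl⟩ := Finset.mem_image.mp hD
    exact hfull (wordMap δ u v') ⟨v', mem_preRC.mpr (Finset.mem_singleton_self _)⟩
end

section
/- If in an AGW graph some vertex p has incoming bunches from two distinct vertices q and r (that is, the out-edges of q form a bunch to p and the out-edges of r form a bunch to p with q ≠ r), then every coloring of the graph has a stable pair of distinct states; indeed (q, r) is stable for every coloring. -/
/-- If a vertex `p` has incoming bunches from two distinct vertices `q`
and `r`, then for every coloring the pair `(q, r)` is a stable pair of distinct states. -/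
theorem two_bunches_stable {V : Type} [Fintype V] [DecidableEq V] [Nonempty V]
    (E : V → Multiset V) (k : ℕ) (hAGW : IsAGW E k)
    (p q r : V) (hqr : q ≠ r)
    (hq : E q = Multiset.replicate k p) (hr : E r = Multiset.replicate k p) :
    ∀ δ : Fin k → V → V, IsColoring E δ → SyncPair δ q r ∧ Stable δ q r := by
  -- first, k must be positive
  have hk : 0 < k := by
    rcases Nat.eq_zero_or_pos k with hk0 | hk
    · exfalso
      have hE : ∀ v, E v = 0 := by
        intro v
        have := hAGW.1 v
        rw [hk0] at this
        exact Multiset.card_eq_zero.mp this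
      have hreach := hAGW.2.1 q r
      have : q = r := by
        induction hreach with
        | refl => rfl
        | tail _ hstep ih => simp [hE] at hstep
      exact hqr this
    · exact hk
  intro δ hδ
  -- every letter maps q and r to p
  have hstep : ∀ (a : Fin k) (x : V), E x = Multiset.replicate k p → δ a x = p := by
    intro a x hx
    have h1 : δ a x ∈ Multiset.map (fun a => δ a x) (Finset.univ : Finset (Fin k)).val :=
      Multiset.mem_map_of_mem _ (Finset.mem_univ_val a)
    rw [hδ x, hx] at h1
    exact Multiset.eq_of_mem_replicate h1
  have key : ∀ u : List (Fin k), u ≠ [] → wordMap δ u q = wordMap δ u r := by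
    intro u hu
    match u with
    | [] => exact absurd rfl hu
    | a :: t =>
      show wordMap δ t (δ a q) = wordMap δ t (δ a r)
      rw [hstep a q hq, hstep a r hr]
  have a0 : Fin k := ⟨0, hk⟩
  have hsync : SyncPair δ q r := ⟨[a0], key [a0] (by simp)⟩
  refine ⟨hsync, fun u => ?_⟩
  rcases List.eq_nil_or_concat u with rfl | _
  · exact hsync
  · exact ⟨[], key u (by rcases ‹∃ _, _› with ⟨l, b, rfl⟩; simp)⟩
end

section
/- Let f be a spanning subgraph of an AGW graph and let δ be a coloring such that δ α = f for some letter α ∈ Fin k. Fix n ≥ 0 and a vertex r, and let N be the set of vertices of level n whose root is r (the vertices of level n of one tree of f). Then every F-clique F of the coloring δ satisfies |F ∩ N| ≤ 1. -/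
/-- If the color `α` of a coloring `δ` realizes a spanning subgraph `f`,
then any F-clique meets the set of vertices of level `n` of one tree of `f`
(those with root `r`) in at most one vertex. -/
theorem FClique_inter_level_card {V : Type} [Fintype V] [DecidableEq V] [Nonempty V]
    (E : V → Multiset V) (k : ℕ) (hAGW : IsAGW E k)
    (f : V → V) (hf : IsSpanning E f)
    (δ : Fin k → V → V) (hδ : IsColoring E δ) (α : Fin k) (hα : δ α = f)
    (n : ℕ) (r : V) (F : Finset V) (hF : IsFClique δ F) :
    (F.filter (fun v => level f v = n ∧ root f v = r)).card ≤ 1 := by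
  have hrep : ∀ v : V, wordMap δ (List.replicate n α) v = f^[n] v := by
    intro v
    induction n generalizing v with
    | zero => rfl
    | succ m ih =>
      simp only [List.replicate_succ, wordMap, List.foldl_cons, hα,
        Function.iterate_succ_apply]
      exact ih (f v)
  apply Finset.card_le_one.2
  intro p hp q hq
  simp only [Finset.mem_filter] at hp hq
  by_contra hne
  apply hF.2 p hp.1 q hq.1 hne
  refine ⟨List.replicate n α, ?_⟩
  rw [hrep, hrep]
  have h1 : f^[n] p = r := by rw [← hp.2.1]; exact hp.2.2
  have h2 : f^[n] q = r := by rw [← hq.2.1]; exact hq.2.2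
  rw [h1, h2]
end

section
/- If an AGW graph with at least two vertices has a spanning subgraph that is a permutation of V (i.e., consists only of disjoint cycles, with no trees), then it also has a spanning subgraph g whose maximal level L is positive and for which exactly one vertex has level L. -/
private lemma agw_chain_last {V : Type} (f : V → V) : ∀ (l : List V) (h : l ≠ []),
    l.Chain' (fun a b => b = f a) → l.getLast h = f^[l.length - 1] (l.head h) := by
  intro l
  induction l with
  | nil => simp
  | cons x t ih =>
    intro h hc
    cases t with
    | nil => simp
    | cons y t' =>
      have h1 : y = f x := (List.isChain_cons_cons.1 hc).1
      have h2 := (List.isChain_cons_cons.1 hc).2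
      have hIH := ih (by simp) h2
      rw [List.getLast_cons (by simp)]
      rw [hIH]
      simp only [List.head_cons, List.length_cons]
      rw [h1, ← Function.iterate_succ_apply]
      congr 1

private lemma agw_level_lt_card {V : Type} [Fintype V] (g : V → V) (v : V) :
    ∃ m, m < Fintype.card V ∧ ∃ n > 0, g^[n] (g^[m] v) = g^[m] v := by
  have hni : ¬ Function.Injective (fun n : Fin (Fintype.card V + 1) => g^[(n : ℕ)] v) := by
    intro hinj
    have := Fintype.card_le_of_injective _ hinj
    simp at this
  obtain ⟨a, b, he, hne⟩ := Function.not_injective_iff.1 hni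
  have ha := a.isLt
  have hb := b.isLt
  rcases Nat.lt_or_ge (a : ℕ) (b : ℕ) with h | h
  · exact ⟨a, by omega, (b : ℕ) - a, by omega, by
      rw [← Function.iterate_add_apply, show (b : ℕ) - a + a = b by omega, ← he]⟩
  · have hab : (a : ℕ) ≠ (b : ℕ) := fun hc => hne (Fin.ext hc)
    exact ⟨b, by omega, (a : ℕ) - b, by omega, by
      rw [← Function.iterate_add_apply, show (a : ℕ) - b + b = a by omega, he]⟩


/-- If an AGW graph with at least two vertices has a spanning subgraph
that is a permutation (only disjoint cycles), then it has a spanning subgraph whose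
maximal level `L` is positive and attained by exactly one vertex. -/
theorem exists_spanning_unique_max_level {V : Type} [Fintype V] [DecidableEq V]
    [Nonempty V] (E : V → Multiset V) (k : ℕ) (hAGW : IsAGW E k)
    (hV : 1 < Fintype.card V)
    (f : V → V) (hf : IsSpanning E f) (hperm : Function.Bijective f) :
    ∃ g : V → V, IsSpanning E g ∧
      ∃ L : ℕ, 0 < L ∧ (∀ v : V, level g v ≤ L) ∧ ∃! v : V, level g v = L := by
  classical
  -- Step 1: find a vertex `v0` with an edge `w ≠ f v0`.
  obtain ⟨v0, w, hw, hwne⟩ : ∃ v0 w, w ∈ E v0 ∧ w ≠ f v0 := by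
    by_contra hcon
    push_neg at hcon
    obtain ⟨hcard, hconn, hgcd⟩ := hAGW
    have S1 : ∀ u v : V, ∃ n, f^[n] u = v := by
      intro u v
      have h := hconn u v
      induction h with
      | refl => exact ⟨0, rfl⟩
      | tail hab hbc ih =>
        obtain ⟨n, hn⟩ := ih
        exact ⟨n + 1, by rw [Function.iterate_succ_apply', hn, ← hcon _ _ hbc]⟩
    have S2 : ∀ v : V, v ∈ Function.periodicPts f := by
      intro v
      obtain ⟨n, hn⟩ := S1 (f v) v
      exact ⟨n + 1, by omega, by
        show f^[n + 1] v = v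
        rw [Function.iterate_succ_apply, hn]⟩
    obtain ⟨x0⟩ := ‹Nonempty V›
    have S3 : ∀ v : V, Function.minimalPeriod f v = Function.minimalPeriod f x0 := by
      intro v
      obtain ⟨n, hn⟩ := S1 x0 v
      rw [← hn]
      exact Function.minimalPeriod_apply_iterate (S2 x0) n
    have hd1 : 1 < Function.minimalPeriod f x0 := by
      have hpos : 0 < Function.minimalPeriod f x0 :=
        Function.minimalPeriod_pos_of_mem_periodicPts (S2 x0)
      rcases Nat.lt_or_ge 1 (Function.minimalPeriod f x0) with h | h
      · exact h
      · exfalso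
        have hd : Function.minimalPeriod f x0 = 1 := by omega
        have hfix : f x0 = x0 := by
          have := Function.isPeriodicPt_minimalPeriod f x0
          rw [hd] at this
          exact this
        have hall : ∀ v : V, v = x0 := by
          intro v
          obtain ⟨n, hn⟩ := S1 x0 v
          rw [← hn]
          clear hn
          induction n with
          | zero => rfl
          | succ n ih => rw [Function.iterate_succ_apply', ih, hfix]
        have : Fintype.card V ≤ 1 :=
          Fintype.card_le_one_iff.2 fun a b => (hall a).trans (hall b).symm
        omega
    have S5 : ∀ l : List V, IsCycle E l → Function.minimalPeriod f x0 ∣ l.length := by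
      intro l hl
      obtain ⟨h, hnd, hch, hcl⟩ := hl
      have hch' : l.Chain' (fun a b => b = f a) :=
        List.IsChain.imp (fun a b hb => hcon a b hb) hch
      have hlast := agw_chain_last f l h hch'
      have hlen : 1 ≤ l.length := by
        cases l with
        | nil => exact absurd rfl h
        | cons a t => simp
      have hper : Function.IsPeriodicPt f l.length (l.head h) := by
        show f^[l.length] (l.head h) = l.head h
        have hhd : l.head h = f (l.getLast h) := hcon _ _ hcl
        rw [hlast] at hhd
        conv_lhs => rw [show l.length = l.length - 1 + 1 from by omega]
        rw [Function.iterate_succ_apply']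
        exact hhd.symm
      have hdvd := hper.minimalPeriod_dvd
      rw [S3] at hdvd
      exact hdvd
    have := hgcd _ S5
    omega
  -- Step 2: modify `f` at `v0`.
  set g : V → V := Function.update f v0 w with hgdef
  have hgv0 : g v0 = w := Function.update_self _ _ _
  have hgne : ∀ y, y ≠ v0 → g y = f y := fun y hy => Function.update_of_ne hy _ _
  have hgspan : IsSpanning E g := by
    intro v
    by_cases hv : v = v0
    · subst hv; rw [hgv0]; exact hw
    · rw [hgne v hv]; exact hf v
  set p := f v0 with hpdef
  have F1 : ∀ y, g y ≠ p := by
    intro y hy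
    by_cases h : y = v0
    · subst h; rw [hgv0] at hy; exact hwne hy
    · rw [hgne y h] at hy; exact h (hperm.1 hy)
  have F2 : ∀ u, u ≠ p → ∃ y, g y = u := by
    intro u hu
    obtain ⟨y, hy⟩ := hperm.2 u
    have hyv : y ≠ v0 := fun h => hu (by rw [← hy, h])
    exact ⟨y, by rw [hgne y hyv, hy]⟩
  have F3 : ∀ v : V, (∃ n > 0, g^[n] v = v) → ∃ n > 0, g^[n] (g v) = g v := by
    rintro v ⟨n, hn, hv⟩
    exact ⟨n, hn, by rw [← Function.iterate_succ_apply, Function.iterate_succ_apply', hv]⟩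
  -- Level facts
  have hne' : ∀ v : V, Set.Nonempty {m | ∃ n > 0, g^[n] (g^[m] v) = g^[m] v} := by
    intro v
    obtain ⟨m, _, hm⟩ := agw_level_lt_card g v
    exact ⟨m, hm⟩
  have hlev_mem : ∀ v : V, ∃ n > 0, g^[n] (g^[level g v] v) = g^[level g v] v := fun v =>
    Nat.sInf_mem (hne' v)
  have hlev_lt : ∀ v : V, level g v < Fintype.card V := by
    intro v
    obtain ⟨m, hm, hmm⟩ := agw_level_lt_card g v
    exact lt_of_le_of_lt (Nat.sInf_le hmm) hm
  have hlev_zero : ∀ v : V, level g v = 0 ↔ ∃ n > 0, g^[n] v = v := by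
    intro v
    constructor
    · intro h
      have h2 := hlev_mem v
      rw [h] at h2
      simpa using h2
    · intro h
      exact Nat.eq_zero_of_le_zero (Nat.sInf_le (by simpa using h))
  have hlev_succ : ∀ v : V, ¬ (∃ n > 0, g^[n] v = v) → level g v = level g (g v) + 1 := by
    intro v hv
    have key : ∀ m : ℕ, (∃ n > 0, g^[n] (g^[m] (g v)) = g^[m] (g v)) ↔
        (∃ n > 0, g^[n] (g^[m + 1] v) = g^[m + 1] v) := by
      intro m
      rw [Function.iterate_succ_apply]
    apply le_antisymm
    · exact Nat.sInf_le ((key _).1 (hlev_mem (g v)))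
    · have h := hlev_mem v
      have hm0 : level g v ≠ 0 := fun h0 => hv ((hlev_zero v).1 h0)
      obtain ⟨m', hm'⟩ : ∃ m', level g v = m' + 1 := ⟨level g v - 1, by omega⟩
      rw [hm'] at h
      have : level g (g v) ≤ m' := Nat.sInf_le ((key m').2 h)
      omega
  have hpnp : ¬ (∃ n > 0, g^[n] p = p) := by
    rintro ⟨n, hn, hnp⟩
    have h2 : g^[n - 1 + 1] p = p := by
      rw [show n - 1 + 1 = n by omega]; exact hnp
    rw [Function.iterate_succ_apply'] at h2
    exact F1 _ h2
  have hLpos : 0 < level g p := by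
    rcases Nat.eq_zero_or_pos (level g p) with h | h
    · exact absurd ((hlev_zero p).1 h) hpnp
    · exact h
  have key : ∀ v : V, ¬ (∃ n > 0, g^[n] v = v) → v ≠ p → level g v < level g p := by
    have main : ∀ N : ℕ, ∀ v : V, Fintype.card V - level g v ≤ N →
        ¬ (∃ n > 0, g^[n] v = v) → v ≠ p → level g v < level g p := by
      intro N
      induction N with
      | zero =>
        intro v hvN _ _
        have := hlev_lt v
        omega
      | succ N ih =>
        intro v hvN hvp hvne
        obtain ⟨u, hu⟩ := F2 v hvne
        have hunp : ¬ (∃ n > 0, g^[n] u = u) := fun h => hvp (by rw [← hu]; exact F3 u h)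
        have hlu : level g u = level g v + 1 := by rw [hlev_succ u hunp, hu]
        by_cases hup : u = p
        · rw [hup] at hlu; omega
        · have := ih u (by omega) hunp hup
          omega
    intro v hv hvp
    exact main (Fintype.card V) v (by omega) hv hvp
  refine ⟨g, hgspan, level g p, hLpos, ?_, p, rfl, ?_⟩
  · intro v
    by_cases hv : ∃ n > 0, g^[n] v = v
    · rw [(hlev_zero v).2 hv]; exact Nat.zero_le _
    · by_cases hvp : v = p
      · rw [hvp]
      · exact le_of_lt (key v hv hvp)
  · intro v hv
    by_cases hvp : v = p
    · exact hvp
    · exfalso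
      by_cases hper : ∃ n > 0, g^[n] v = v
      · rw [(hlev_zero v).2 hper] at hv; omega
      · exact absurd hv (ne_of_lt (key v hper hvp))
end

section
/- If in an AGW graph with at least two vertices no vertex has incoming bunches from two distinct vertices (there are no distinct q, r whose out-edges both form a bunch to one common vertex p), then the graph has a spanning subgraph f whose maximal level L is positive and such that all vertices of level L lie in one tree of f (they all have the same root). -/
open Function
set_option linter.unusedSectionVars false

namespace RC

variable {V : Type} [Fintype V] [DecidableEq V]

lemma level_def (f : V → V) (v : V) :
    level f v = sInf {m | f^[m] v ∈ periodicPts f} := rfl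

lemma periodic_of_iterate_eq {f : V → V} {v : V} {i j : ℕ} (h : i < j)
    (he : f^[i] v = f^[j] v) : f^[i] v ∈ periodicPts f := by
  refine mk_mem_periodicPts (n := j - i) (by omega) ?_
  show f^[j-i] (f^[i] v) = f^[i] v
  rw [← iterate_add_apply, show j - i + i = j by omega]
  exact he.symm

lemma exists_iterate_mem_periodicPts (f : V → V) (v : V) :
    ∃ m, m ≤ Fintype.card V ∧ f^[m] v ∈ periodicPts f := by
  obtain ⟨i, j, hne, hij⟩ := Fintype.exists_ne_map_eq_of_card_lt
    (fun i : Fin (Fintype.card V + 1) => f^[(i : ℕ)] v) (by simp)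
  rcases lt_or_gt_of_ne (show (i : ℕ) ≠ (j : ℕ) from fun h => hne (Fin.ext h)) with h | h
  · exact ⟨i, by omega, periodic_of_iterate_eq h hij⟩
  · exact ⟨j, by omega, periodic_of_iterate_eq h hij.symm⟩

lemma levelSet_nonempty (f : V → V) (v : V) :
    {m | f^[m] v ∈ periodicPts f}.Nonempty := by
  obtain ⟨m, -, hm⟩ := exists_iterate_mem_periodicPts f v
  exact ⟨m, hm⟩

lemma iterate_level_mem (f : V → V) (v : V) : f^[level f v] v ∈ periodicPts f := by
  rw [level_def]; exact Nat.sInf_mem (levelSet_nonempty f v)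

lemma level_le {f : V → V} {v : V} {m : ℕ} (h : f^[m] v ∈ periodicPts f) :
    level f v ≤ m := Nat.sInf_le h

lemma not_mem_of_lt_level {f : V → V} {v : V} {m : ℕ} (h : m < level f v) :
    f^[m] v ∉ periodicPts f := fun hm => absurd (level_le hm) (by omega)

lemma level_le_card (f : V → V) (v : V) : level f v ≤ Fintype.card V := by
  obtain ⟨m, hm, hmem⟩ := exists_iterate_mem_periodicPts f v
  exact le_trans (level_le hmem) hm

lemma root_mem (f : V → V) (v : V) : root f v ∈ periodicPts f := iterate_level_mem f v

lemma level_eq_zero_iff {f : V → V} {v : V} : level f v = 0 ↔ v ∈ periodicPts f := by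
  constructor
  · intro h
    have := iterate_level_mem f v
    rwa [h, iterate_zero_apply] at this
  · intro h
    have : level f v ≤ 0 := level_le (by rwa [iterate_zero_apply])
    omega

lemma root_eq_self {f : V → V} {v : V} (h : v ∈ periodicPts f) : root f v = v := by
  rw [root, level_eq_zero_iff.2 h, iterate_zero_apply]

lemma level_root_spec {f : V → V} {v : V} {t : ℕ}
    (h1 : ∀ i < t, f^[i] v ∉ periodicPts f) (h2 : f^[t] v ∈ periodicPts f) :
    level f v = t ∧ root f v = f^[t] v := by
  have hle : level f v ≤ t := level_le h2
  have hnlt : ¬ level f v < t := fun hlt => h1 _ hlt (iterate_level_mem f v)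
  have hlv : level f v = t := by omega
  exact ⟨hlv, by rw [root, hlv]⟩

lemma level_succ_of_not_periodic {f : V → V} {v : V} (h : v ∉ periodicPts f) :
    level f v = level f (f v) + 1 ∧ root f v = root f (f v) := by
  have h2 : f^[level f (f v) + 1] v ∈ periodicPts f := by
    rw [iterate_succ_apply]; exact iterate_level_mem f (f v)
  have h1 : ∀ i < level f (f v) + 1, f^[i] v ∉ periodicPts f := by
    intro i hi
    cases i with
    | zero => simpa using h
    | succ j =>
        rw [iterate_succ_apply]
        exact not_mem_of_lt_level (by omega)
  obtain ⟨hl, hr⟩ := level_root_spec h1 h2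
  exact ⟨hl, by rw [hr, root, iterate_succ_apply]⟩

lemma level_iterate {f : V → V} {v : V} {t : ℕ} (h : t ≤ level f v) :
    level f (f^[t] v) = level f v - t ∧ root f (f^[t] v) = root f v := by
  induction t with
  | zero => simp
  | succ n ih =>
    obtain ⟨ihl, ihr⟩ := ih (by omega)
    have hnp : f^[n] v ∉ periodicPts f := by
      apply not_mem_of_lt_level; omega
    obtain ⟨hl, hr⟩ := level_succ_of_not_periodic hnp
    rw [ihl] at hl
    constructor
    · rw [iterate_succ_apply', ← ihl] at *; omega
    · rw [iterate_succ_apply', ← hr, ihr]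

lemma iterate_mem_periodicPts {f : V → V} {v : V} (h : v ∈ periodicPts f) (m : ℕ) :
    f^[m] v ∈ periodicPts f := by
  induction m with
  | zero => simpa
  | succ n ih =>
    obtain ⟨k, hk, hp⟩ := ih
    rw [iterate_succ_apply']
    exact mk_mem_periodicPts hk hp.apply

lemma injOn_periodicPts {f : V → V} {a b : V} (ha : a ∈ periodicPts f)
    (hb : b ∈ periodicPts f) (h : f a = f b) : a = b := by
  obtain ⟨m, hm, hpa⟩ := ha
  obtain ⟨n, hn, hpb⟩ := hb
  have hpa' : IsPeriodicPt f (m * n) a := hpa.mul_const n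
  have hpb' : IsPeriodicPt f (m * n) b := by
    have := hpb.mul_const m; rwa [mul_comm] at this
  have hmn : 1 ≤ m * n := Nat.mul_pos hm hn
  have ha' : f^[m*n - 1] (f a) = a := by
    have : f^[m*n - 1 + 1] a = a := by rw [show m*n - 1 + 1 = m*n by omega]; exact hpa'
    rwa [iterate_succ_apply] at this
  have hb' : f^[m*n - 1] (f b) = b := by
    have : f^[m*n - 1 + 1] b = b := by rw [show m*n - 1 + 1 = m*n by omega]; exact hpb'
    rwa [iterate_succ_apply] at this
  rw [← ha', ← hb', h]

lemma exists_iterate_back {f : V → V} {w x : V} (hw : w ∈ periodicPts f) {t : ℕ}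
    (h : f^[t] w = x) : ∃ i, f^[i] x = w := by
  obtain ⟨n, hn, hp⟩ := hw
  have hN : IsPeriodicPt f (n * (t + 1)) w := hp.mul_const (t + 1)
  have hge : t ≤ n * (t + 1) := by nlinarith
  refine ⟨n * (t + 1) - t, ?_⟩
  rw [← h, ← iterate_add_apply, show n * (t+1) - t + t = n * (t+1) by omega]
  exact hN

end RC

namespace RC
variable {V : Type} [Fintype V] [DecidableEq V]

section update

variable {f : V → V} {w z : V}

lemma upd_ne {x : V} (h : x ≠ w) : update f w z x = f x := Function.update_of_ne h z f

lemma upd_self : update f w z w = z := Function.update_self w z f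

lemma iterate_update_eq {x : V} {m : ℕ} (h : ∀ i < m, f^[i] x ≠ w) :
    (update f w z)^[m] x = f^[m] x := by
  induction m with
  | zero => rfl
  | succ n ih =>
    rw [iterate_succ_apply', iterate_succ_apply', ih (fun i hi => h i (by omega))]
    exact upd_ne (h n (by omega))

lemma iterate_update_eq' {x : V} {m : ℕ} (h : ∀ i < m, (update f w z)^[i] x ≠ w) :
    (update f w z)^[m] x = f^[m] x := by
  induction m with
  | zero => rfl
  | succ n ih =>
    have hn := ih (fun i hi => h i (by omega))
    rw [iterate_succ_apply', iterate_succ_apply', hn]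
    exact upd_ne (hn ▸ h n (by omega))

lemma mem_periodicPts_update_iff {x : V} (h : ∀ i, f^[i] x ≠ w) :
    x ∈ periodicPts (update f w z) ↔ x ∈ periodicPts f := by
  constructor
  · rintro ⟨n, hn, hp⟩
    refine ⟨n, hn, ?_⟩
    have hp' : (update f w z)^[n] x = x := hp
    have heq := iterate_update_eq (f := f) (w := w) (z := z) (x := x) (m := n) (fun i _ => h i)
    show f^[n] x = x
    rw [← heq]; exact hp'
  · rintro ⟨n, hn, hp⟩
    refine ⟨n, hn, ?_⟩
    have hp' : f^[n] x = x := hp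
    have heq := iterate_update_eq (f := f) (w := w) (z := z) (x := x) (m := n) (fun i _ => h i)
    show (update f w z)^[n] x = x
    rw [heq]; exact hp'

lemma level_root_update_eq {x : V} (h : ∀ i, f^[i] x ≠ w) :
    level (update f w z) x = level f x ∧ root (update f w z) x = root f x := by
  have hset : ∀ m, ((update f w z)^[m] x ∈ periodicPts (update f w z)) ↔
      (f^[m] x ∈ periodicPts f) := by
    intro m
    rw [iterate_update_eq (fun i _ => h i)]
    exact mem_periodicPts_update_iff (fun i => by
      rw [← iterate_add_apply]; exact h _)
  have hl : level (update f w z) x = level f x := by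
    rw [level_def, level_def]
    congr 1
    ext m
    exact hset m
  refine ⟨hl, ?_⟩
  rw [root, root, hl]
  exact iterate_update_eq (fun i _ => h i)

/-- If the orbit of `z` avoids `w`, then `w` is not periodic for the updated map. -/
lemma w_not_periodic_update (hz : ∀ i, f^[i] z ≠ w) : w ∉ periodicPts (update f w z) := by
  rintro ⟨n, hn, hp⟩
  have h1 : (update f w z)^[n] w = (update f w z)^[n-1] z := by
    conv_lhs => rw [show n = (n-1) + 1 by omega]
    rw [iterate_succ_apply, upd_self]
  -- the g-orbit of z avoids w
  have hz' : ∀ i, (update f w z)^[i] z ≠ w := by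
    intro i
    by_contra hhit
    -- take minimal g-hit
    have hne : {j | (update f w z)^[j] z = w}.Nonempty := ⟨i, by simpa using hhit⟩
    set t := sInf {j | (update f w z)^[j] z = w} with ht
    have htmem : (update f w z)^[t] z = w := Nat.sInf_mem hne
    have htmin : ∀ j < t, (update f w z)^[j] z ≠ w := fun j hj hmem =>
      absurd (Nat.sInf_le (show j ∈ {j | (update f w z)^[j] z = w} from hmem))
        (by omega)
    have : (update f w z)^[t] z = f^[t] z := iterate_update_eq' htmin
    exact hz t (by rw [← this, htmem])
  have hp' : (update f w z)^[n] w = w := hp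
  rw [h1] at hp'
  exact hz' (n-1) hp'

lemma orbit_avoids_of_periodic (hw : w ∉ periodicPts f) {x : V} (hx : x ∈ periodicPts f) :
    ∀ i, f^[i] x ≠ w := fun i he => hw (by rw [← he]; exact iterate_mem_periodicPts hx i)

lemma subset_periodic_update (hw : w ∉ periodicPts f) :
    periodicPts f ⊆ periodicPts (update f w z) := fun x hx =>
  (mem_periodicPts_update_iff (orbit_avoids_of_periodic hw hx)).2 hx

/-- no new cycle: the periodic points are unchanged. -/
lemma periodicPts_update_eq (hw : w ∉ periodicPts f) (hz : ∀ i, f^[i] z ≠ w) :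
    periodicPts (update f w z) = periodicPts f := by
  apply Set.Subset.antisymm _ (subset_periodic_update hw)
  intro x hx
  have hxav : ∀ i, (update f w z)^[i] x ≠ w := by
    intro i he
    have hm := iterate_mem_periodicPts hx i
    rw [he] at hm
    exact w_not_periodic_update hz hm
  have : ∀ i, f^[i] x ≠ w := by
    intro i
    have := iterate_update_eq' (f := f) (w := w) (z := z) (x := x) (m := i)
      (fun j _ => hxav j)
    rw [← this]; exact hxav i
  exact (mem_periodicPts_update_iff this).1 hx

/-- new cycle through `w` created: periodic points strictly increase. -/
lemma periodicPts_update_ssubset (hw : w ∉ periodicPts f) {t : ℕ} (hz : f^[t] z = w) :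
    periodicPts f ⊂ periodicPts (update f w z) := by
  refine ⟨subset_periodic_update hw, fun hsub => ?_⟩
  -- w is periodic for the update
  have hne : {j | f^[j] z = w}.Nonempty := ⟨t, hz⟩
  set t0 := sInf {j | f^[j] z = w} with ht0
  have ht0mem : f^[t0] z = w := Nat.sInf_mem hne
  have ht0min : ∀ j < t0, f^[j] z ≠ w := fun j hj hmem =>
    absurd (Nat.sInf_le (show j ∈ {j | f^[j] z = w} from hmem)) (by omega)
  have hg : (update f w z)^[t0] z = w := by rw [iterate_update_eq ht0min]; exact ht0mem
  have hwper : w ∈ periodicPts (update f w z) := by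
    refine mk_mem_periodicPts (n := t0 + 1) (by omega) ?_
    show (update f w z)^[t0+1] w = w
    rw [iterate_succ_apply, upd_self, hg]
  exact hw (hsub hwper)

/-- removing the cycle edge at a periodic point `w`, with `z`'s orbit avoiding
`w`'s cycle: the periodic points are the old ones minus the cycle of `w`. -/
lemma periodicPts_update_sdiff (hw : w ∈ periodicPts f)
    (hz : ∀ i j, f^[i] z ≠ f^[j] w) :
    periodicPts (update f w z) = periodicPts f \ {x | ∃ j, f^[j] w = x} := by
  have hzw : ∀ i, f^[i] z ≠ w := fun i => by
    have := hz i 0; simpa using this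
  have hwnp : w ∉ periodicPts (update f w z) := w_not_periodic_update hzw
  ext x
  constructor
  · intro hx
    have hxav : ∀ i, (update f w z)^[i] x ≠ w := by
      intro i he
      have hm := iterate_mem_periodicPts hx i
      rw [he] at hm
      exact hwnp hm
    have hfav : ∀ i, f^[i] x ≠ w := by
      intro i
      have := iterate_update_eq' (f := f) (w := w) (z := z) (x := x) (m := i)
        (fun j _ => hxav j)
      rw [← this]; exact hxav i
    have hxf : x ∈ periodicPts f := (mem_periodicPts_update_iff hfav).1 hx
    refine ⟨hxf, ?_⟩
    rintro ⟨j, hj⟩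
    obtain ⟨i, hi⟩ := exists_iterate_back hw hj
    exact hfav i hi
  · rintro ⟨hxf, hxK⟩
    have hfav : ∀ i, f^[i] x ≠ w := by
      intro i he
      obtain ⟨j, hj⟩ := exists_iterate_back hxf he
      exact hxK ⟨j, hj⟩
    exact (mem_periodicPts_update_iff hfav).2 hxf

end update
end RC

namespace RC
variable {V : Type} [Fintype V] [DecidableEq V]

/-- The inner "good" condition of the target theorem. -/
def GoodStat (g : V → V) : Prop :=
  ∃ L : ℕ, 0 < L ∧ (∀ v, level g v ≤ L) ∧ (∃ v, level g v = L) ∧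
    ∀ u v, level g u = L → level g v = L → root g u = root g v

noncomputable def maxLevel (f : V → V) : ℕ := Finset.univ.sup (level f)

noncomputable def cyc (f : V → V) : ℕ := (periodicPts f).ncard

noncomputable def Phi (f : V → V) : ℕ := cyc f * (Fintype.card V + 1) + maxLevel f

lemma level_le_maxLevel (f : V → V) (v : V) : level f v ≤ maxLevel f :=
  Finset.le_sup (Finset.mem_univ v)

lemma maxLevel_le_card (f : V → V) : maxLevel f ≤ Fintype.card V :=
  Finset.sup_le (fun v _ => level_le_card f v)

lemma cyc_le_card (f : V → V) : cyc f ≤ Fintype.card V := by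
  have : (periodicPts f).ncard ≤ (Set.univ : Set V).ncard :=
    Set.ncard_le_ncard (Set.subset_univ _) (Set.toFinite _)
  simpa [cyc, Set.ncard_univ] using this

lemma phi_lt_of_cyc_lt {f g : V → V} (h : cyc f < cyc g) : Phi f < Phi g := by
  have h1 := maxLevel_le_card f
  have h2 : cyc f + 1 ≤ cyc g := h
  unfold Phi
  nlinarith [Nat.zero_le (maxLevel g)]

lemma phi_lt_of_cyc_eq {f g : V → V} (h : cyc f = cyc g)
    (h2 : maxLevel f < maxLevel g) : Phi f < Phi g := by
  unfold Phi
  rw [h]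
  omega

lemma maxLevel_lt_of_phi {f g : V → V} (h : Phi g ≤ Phi f) (hc : cyc f = cyc g) :
    maxLevel g ≤ maxLevel f := by
  by_contra hlt
  exact absurd (phi_lt_of_cyc_eq hc (by omega)) (by omega)

lemma cyc_le_of_phi {f g : V → V} (h : Phi g ≤ Phi f) : cyc g ≤ cyc f := by
  by_contra hlt
  exact absurd (phi_lt_of_cyc_lt (show cyc f < cyc g by omega)) (by omega)

lemma good_of_dichotomy [Nonempty V] {g : V → V} {L₀ : ℕ} {r : V}
    (hbig : ∃ v, L₀ < level g v) (hdich : ∀ v, L₀ < level g v → root g v = r) :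
    GoodStat g := by
  obtain ⟨v, hv⟩ := hbig
  refine ⟨maxLevel g, ?_, fun u => level_le_maxLevel g u, ?_, ?_⟩
  · have := level_le_maxLevel g v; omega
  · obtain ⟨i, -, hi⟩ := Finset.exists_mem_eq_sup Finset.univ Finset.univ_nonempty (level g)
    exact ⟨i, hi.symm⟩
  · intro a b ha hb
    have hva := level_le_maxLevel g v
    rw [hdich a (by omega), hdich b (by omega)]

lemma spanning_update {E : V → Multiset V} {f : V → V} (hf : IsSpanning E f)
    {w z : V} (hz : z ∈ E w) : IsSpanning E (update f w z) := by
  intro v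
  by_cases h : v = w
  · subst h; rw [upd_self]; exact hz
  · rw [upd_ne h]; exact hf v

/-- `f^[j] x = f^[j % n] x` for an `n`-periodic point. -/
lemma iterate_mod_of_periodic {f : V → V} {x : V} {n : ℕ} (hn : 0 < n)
    (hp : IsPeriodicPt f n x) (j : ℕ) : f^[j] x = f^[j % n] x := by
  conv_lhs => rw [show j = n * (j / n) + j % n from (Nat.div_add_mod j n).symm]
  rw [add_comm, iterate_add_apply]
  congr 1
  exact hp.mul_const (j / n)

lemma minimalPeriod_iterate_eq {f : V → V} {x : V} (hx : x ∈ periodicPts f) (d : ℕ) :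
    minimalPeriod f (f^[d] x) = minimalPeriod f x := by
  induction d with
  | zero => rfl
  | succ n ih =>
    rw [iterate_succ_apply', minimalPeriod_apply (iterate_mem_periodicPts hx n), ih]

/-- existence of an in-edge for every vertex, from strong connectivity. -/
lemma exists_in_edge {E : V → Multiset V}
    (hconn : ∀ u v : V, Relation.ReflTransGen (fun a b => b ∈ E a) u v)
    (hV : 1 < Fintype.card V) (p : V) : ∃ w, p ∈ E w := by
  obtain ⟨u, hu⟩ := Fintype.exists_ne_of_one_lt_card hV p
  rcases (hconn u p).cases_tail with h | ⟨c, -, hc⟩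
  · exact absurd h.symm hu
  · exact ⟨c, hc⟩

/-- existence of an out-edge for every vertex. -/
lemma exists_out_edge {E : V → Multiset V}
    (hconn : ∀ u v : V, Relation.ReflTransGen (fun a b => b ∈ E a) u v)
    (hV : 1 < Fintype.card V) (p : V) : ∃ w, w ∈ E p := by
  obtain ⟨u, hu⟩ := Fintype.exists_ne_of_one_lt_card hV p
  rcases Relation.ReflTransGen.cases_head (hconn p u) with h | ⟨c, hc, -⟩
  · exact absurd h (Ne.symm hu)
  · exact ⟨c, hc⟩

end RC

namespace RC
variable {V : Type} [Fintype V] [DecidableEq V]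

lemma S3good [Nonempty V] {f : V → V} {p w : V} {L : ℕ}
    (hmax : ∀ x, level f x ≤ L) (hpL : level f p = L)
    (hw : w ∈ periodicPts f) (hnr : ¬ ∃ t, f^[t] (f^[L] p) = w) :
    GoodStat (update f w p) := by
  set r := f^[L] p with hr_def
  set g := update f w p with hg_def
  have hgw : g w = p := upd_self
  have hrP : r ∈ periodicPts f := by
    have := iterate_level_mem f p; rwa [hpL] at this
  have hIter : ∀ i, L ≤ i → f^[i] p = f^[i - L] r := by
    intro i hi
    rw [hr_def, ← iterate_add_apply, show i - L + L = i by omega]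
  have hpav : ∀ i, f^[i] p ≠ w := by
    intro i he
    rcases lt_or_ge i L with h | h
    · have : f^[i] p ∉ periodicPts f := not_mem_of_lt_level (by omega)
      rw [he] at this; exact this hw
    · exact hnr ⟨i - L, by rw [← hIter i h]; exact he⟩
  have hKav : ∀ i j, f^[i] p ≠ f^[j] w := by
    intro i j he
    rcases lt_or_ge i L with h | h
    · have h1 : f^[i] p ∉ periodicPts f := not_mem_of_lt_level (by omega)
      rw [he] at h1; exact h1 (iterate_mem_periodicPts hw j)
    · obtain ⟨a, ha⟩ := exists_iterate_back hw (rfl : f^[j] w = f^[j] w)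
      refine hnr ⟨a + (i - L), ?_⟩
      rw [iterate_add_apply, ← hIter i h, he, ha]
  have hPg : periodicPts g = periodicPts f \ {x | ∃ j, f^[j] w = x} :=
    periodicPts_update_sdiff hw hKav
  have hPg_sub : periodicPts g ⊆ periodicPts f := by rw [hPg]; exact Set.diff_subset
  have hrKw : r ∉ {x | ∃ j, f^[j] w = x} := by
    rintro ⟨j, hj⟩
    exact hnr (exists_iterate_back hw hj)
  have hrPg : r ∈ periodicPts g := by rw [hPg]; exact ⟨hrP, hrKw⟩
  have hwPg : w ∉ periodicPts g := by
    rw [hPg]; rintro ⟨-, h2⟩; exact h2 ⟨0, rfl⟩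
  have hgp : ∀ i, g^[i] p = f^[i] p := fun i =>
    iterate_update_eq (fun j _ => hpav j)
  -- the level of w in g is L + 1
  have hpost0 : ∀ i, g^[1 + i] w = f^[i] p := by
    intro i
    rw [show 1 + i = i + 1 by omega, iterate_add_apply, iterate_one, hgw, hgp i]
  have hlw : level g w = L + 1 := by
    refine (level_root_spec (f := g) (v := w) (t := L + 1) ?_ ?_).1
    · intro i hi
      cases i with
      | zero => simpa using hwPg
      | succ n =>
        rw [show n + 1 = 1 + n by omega, hpost0 n]
        intro hmem
        exact not_mem_of_lt_level (by rw [hpL]; omega) (hPg_sub hmem)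
    · rw [show L + 1 = 1 + L by omega, hpost0 L, ← hr_def]
      exact hrPg
  -- dichotomy
  have hdich : ∀ x, L < level g x → root g x = r := by
    intro x hx
    set ℓ := level f x with hℓdef
    have hℓL : ℓ ≤ L := hmax x
    have hyP : f^[ℓ] x ∈ periodicPts f := iterate_level_mem f x
    have hgf : ∀ i ≤ ℓ, g^[i] x = f^[i] x := by
      intro i hi
      apply iterate_update_eq
      intro t ht hte
      have : f^[t] x ∉ periodicPts f := not_mem_of_lt_level (by omega)
      rw [hte] at this; exact this hw
    have hynPg : f^[ℓ] x ∉ periodicPts g := by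
      intro hmem
      have : level g x ≤ ℓ := level_le (by rw [hgf ℓ le_rfl]; exact hmem)
      omega
    have hyK : f^[ℓ] x ∈ {x | ∃ j, f^[j] w = x} := by
      by_contra hn
      exact hynPg (by rw [hPg]; exact ⟨hyP, hn⟩)
    obtain ⟨j, hj⟩ := hyK
    obtain ⟨a, ha⟩ := exists_iterate_back hw hj
    have hhit : f^[ℓ + a] x = w := by
      rw [show ℓ + a = a + ℓ by omega, iterate_add_apply, ha]
    have hTne : {i | f^[i] x = w}.Nonempty := ⟨ℓ + a, hhit⟩
    set T1 := sInf {i | f^[i] x = w} with hT1def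
    have hT1w : f^[T1] x = w := Nat.sInf_mem hTne
    have hT1min : ∀ i < T1, f^[i] x ≠ w := fun i hi hmem =>
      absurd (Nat.sInf_le (show i ∈ {i | f^[i] x = w} from hmem)) (by omega)
    have hT1ℓ : ℓ ≤ T1 := by
      have : level f x ≤ T1 := level_le (by rw [hT1w]; exact hw)
      omega
    have hgx : ∀ i ≤ T1, g^[i] x = f^[i] x := fun i hi =>
      iterate_update_eq (fun t ht => hT1min t (by omega))
    have hpost : ∀ i, g^[T1 + 1 + i] x = f^[i] p := by
      intro i
      have h1 : g^[T1 + 1] x = p := by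
        rw [iterate_succ_apply', hgx T1 le_rfl, hT1w, hgw]
      rw [show T1 + 1 + i = i + (T1 + 1) by omega, iterate_add_apply, h1, hgp i]
    have hspec := level_root_spec (f := g) (v := x) (t := T1 + 1 + L)
      (by
        intro i hi
        rcases lt_or_ge i (T1 + 1) with h2 | h2
        · rw [hgx i (by omega)]
          rcases lt_or_ge i ℓ with h3 | h3
          · intro hmem
            exact not_mem_of_lt_level (show i < level f x by omega) (hPg_sub hmem)
          · intro hmem
            rw [hPg] at hmem
            apply hmem.2
            refine ⟨(i - ℓ) + j, ?_⟩
            rw [iterate_add_apply, hj, ← iterate_add_apply,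
              show i - ℓ + ℓ = i by omega]
        · rw [show i = T1 + 1 + (i - (T1 + 1)) by omega, hpost]
          intro hmem
          exact not_mem_of_lt_level
            (show i - (T1 + 1) < level f p by rw [hpL]; omega) (hPg_sub hmem))
      (by rw [hpost L, ← hr_def]; exact hrPg)
    rw [hspec.2, hpost L, ← hr_def]
  exact good_of_dichotomy ⟨w, by omega⟩ hdich

end RC

namespace RC
variable {V : Type} [Fintype V] [DecidableEq V]

lemma S4main {f : V → V} {p w : V} {L d m : ℕ}
    (hmax : ∀ x, level f x ≤ L) (hpL : level f p = L)
    (hd : f^[d] (f^[L] p) = w) (hm : m = minimalPeriod f (f^[L] p)) (hdm : d < m) :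
    periodicPts (update f w p) =
      (periodicPts f \ {x | ∃ j, f^[j] w = x}) ∪ {x | ∃ i ≤ L + d, f^[i] p = x}
    ∧ (periodicPts (update f w p)).ncard + m = (periodicPts f).ncard + (L + d + 1)
    ∧ (∀ x, level (update f w p) x ≤ L ∨ root (update f w p) x = f^[L] p)
    ∧ (d + 1 < m →
        level (update f w p) (f w) = m - d - 1
        ∧ root (update f w p) (f w) = f^[L] p) := by
  set r := f^[L] p with hr_def
  set g := update f w p with hg_def
  set s := L + d with hs_def
  have hgw : g w = p := upd_self
  have hrP : r ∈ periodicPts f := by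
    have := iterate_level_mem f p; rwa [hpL] at this
  have hm0 : 0 < m := by rw [hm]; exact minimalPeriod_pos_of_mem_periodicPts hrP
  have hperiod : f^[m] r = r := by rw [hm]; exact isPeriodicPt_minimalPeriod f r
  have hwP : w ∈ periodicPts f := by rw [← hd]; exact iterate_mem_periodicPts hrP d
  have hIter : ∀ i, L ≤ i → f^[i] p = f^[i - L] r := by
    intro i hi
    rw [hr_def, ← iterate_add_apply, show i - L + L = i by omega]
  have hinj : ∀ a b, a < m → b < m → f^[a] r = f^[b] r → a = b := by
    intro a b ha hb he
    have := iterate_injOn_Iio_minimalPeriod (f := f) (x := r)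
      (Set.mem_Iio.2 (by omega : a < minimalPeriod f r))
      (Set.mem_Iio.2 (by omega : b < minimalPeriod f r)) he
    exact this
  have hs : f^[s] p = w := by
    rw [hs_def, show L + d = d + L by omega, iterate_add_apply, hd]
  -- injectivity of the new cycle
  have hCinj : ∀ i ≤ s, ∀ j ≤ s, f^[i] p = f^[j] p → i = j := by
    intro i hi j hj he
    rcases lt_or_ge i L with h1 | h1 <;> rcases lt_or_ge j L with h2 | h2
    · have e1 : level f (f^[i] p) = L - i := by
        rw [(level_iterate (by omega : i ≤ level f p)).1, hpL]
      have e2 : level f (f^[j] p) = L - j := by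
        rw [(level_iterate (by omega : j ≤ level f p)).1, hpL]
      rw [he, e2] at e1; omega
    · have hnp : f^[i] p ∉ periodicPts f := not_mem_of_lt_level (by omega)
      have hpp : f^[j] p ∈ periodicPts f := by
        rw [hIter j h2]; exact iterate_mem_periodicPts hrP _
      rw [he] at hnp; exact absurd hpp hnp
    · have hnp : f^[j] p ∉ periodicPts f := not_mem_of_lt_level (by omega)
      have hpp : f^[i] p ∈ periodicPts f := by
        rw [hIter i h1]; exact iterate_mem_periodicPts hrP _
      rw [← he] at hnp; exact absurd hpp hnp
    · have := hinj (i - L) (j - L) (by omega) (by omega)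
        (by rw [← hIter i h1, ← hIter j h2]; exact he)
      omega
  have hpav : ∀ i < s, f^[i] p ≠ w := by
    intro i hi he
    have := hCinj i (by omega) s le_rfl (by rw [he, hs])
    omega
  have hgit : ∀ i ≤ s, g^[i] p = f^[i] p := fun i hi =>
    iterate_update_eq (fun t ht => hpav t (by omega))
  have hws : g^[s + 1] w = w := by
    rw [iterate_succ_apply, hgw, hgit s le_rfl, hs]
  have hwPg : w ∈ periodicPts g := mk_mem_periodicPts (by omega) hws
  have hpPg : p ∈ periodicPts g := by
    have := iterate_mem_periodicPts hwPg 1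
    rwa [iterate_one, hgw] at this
  have hback : f^[m - d] w = r := by
    rw [← hd, ← iterate_add_apply, show m - d + d = m by omega, hperiod]
  -- the set identity
  have hPg : periodicPts g =
      (periodicPts f \ {x | ∃ j, f^[j] w = x}) ∪ {x | ∃ i ≤ s, f^[i] p = x} := by
    ext x
    constructor
    · intro hx
      by_cases hhit : ∃ i, g^[i] x = w
      · right
        obtain ⟨i, hi⟩ := hhit
        obtain ⟨j, hj⟩ := exists_iterate_back (f := g) hx hi
        have hper : IsPeriodicPt g (s + 1) w := hws
        have hj' : g^[j % (s + 1)] w = x := by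
          rw [← iterate_mod_of_periodic (by omega) hper j, hj]
        rcases Nat.eq_zero_or_pos (j % (s + 1)) with h0 | h0
        · rw [h0, iterate_zero_apply] at hj'
          exact ⟨s, le_rfl, by rw [hs, hj']⟩
        · have hle : j % (s + 1) - 1 ≤ s := by
            have := Nat.mod_lt j (show 0 < s + 1 by omega); omega
          refine ⟨j % (s + 1) - 1, hle, ?_⟩
          rw [← hgit _ hle, ← hj']
          conv_rhs => rw [show j % (s + 1) = (j % (s + 1) - 1) + 1 by omega]
          rw [iterate_succ_apply, hgw]
      · push_neg at hhit
        have hfg : ∀ i, g^[i] x = f^[i] x := fun i =>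
          iterate_update_eq' (fun t _ => hhit t)
        have hfav : ∀ i, f^[i] x ≠ w := fun i => by
          rw [← hfg i]; exact hhit i
        have hxf : x ∈ periodicPts f := (mem_periodicPts_update_iff hfav).1 hx
        left
        refine ⟨hxf, ?_⟩
        rintro ⟨j, hj⟩
        obtain ⟨i, hi⟩ := exists_iterate_back hwP hj
        exact hfav i hi
    · rintro (⟨hxP, hxK⟩ | ⟨i, hi, rfl⟩)
      · have hfav : ∀ t, f^[t] x ≠ w := by
          intro t he
          obtain ⟨j, hj⟩ := exists_iterate_back hxP he
          exact hxK ⟨j, hj⟩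
        exact (mem_periodicPts_update_iff hfav).2 hxP
      · rw [← hgit i hi]
        exact iterate_mem_periodicPts hpPg i
  -- cardinalities
  have hKsub : {x | ∃ j, f^[j] w = x} ⊆ periodicPts f := by
    rintro x ⟨j, hj⟩
    rw [← hj]; exact iterate_mem_periodicPts hwP j
  have hmw : minimalPeriod f w = m := by
    rw [← hd, minimalPeriod_iterate_eq hrP d, ← hm]
  have hKcard : {x | ∃ j, f^[j] w = x}.ncard = m := by
    have hKeq : {x | ∃ j, f^[j] w = x} =
        ↑((Finset.range m).image (fun j => f^[j] w)) := by
      ext x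
      simp only [Finset.coe_image, Finset.coe_range, Set.mem_image, Set.mem_Iio,
        Set.mem_setOf_eq]
      constructor
      · rintro ⟨j, hj⟩
        refine ⟨j % m, Nat.mod_lt _ (by omega), ?_⟩
        rw [← hj, ← hmw, iterate_mod_minimalPeriod_eq]
      · rintro ⟨j, -, hj⟩
        exact ⟨j, hj⟩
    rw [hKeq, Set.ncard_coe_finset, Finset.card_image_of_injOn, Finset.card_range]
    intro a ha b hb he
    simp only [Finset.coe_range, Set.mem_Iio] at ha hb
    have he' : f^[a] w = f^[b] w := he
    exact iterate_injOn_Iio_minimalPeriod (f := f) (x := w)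
      (Set.mem_Iio.2 (show a < minimalPeriod f w by omega))
      (Set.mem_Iio.2 (show b < minimalPeriod f w by omega)) he'
  have hCcard : {x | ∃ i ≤ s, f^[i] p = x}.ncard = s + 1 := by
    have hCeq : {x | ∃ i ≤ s, f^[i] p = x} =
        ↑((Finset.range (s + 1)).image (fun i => f^[i] p)) := by
      ext x
      simp only [Finset.coe_image, Finset.coe_range, Set.mem_image, Set.mem_Iio,
        Set.mem_setOf_eq]
      constructor
      · rintro ⟨i, hi, he⟩; exact ⟨i, by omega, he⟩
      · rintro ⟨i, hi, he⟩; exact ⟨i, by omega, he⟩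
    rw [hCeq, Set.ncard_coe_finset, Finset.card_image_of_injOn, Finset.card_range]
    intro a ha b hb he
    simp only [Finset.coe_range, Set.mem_Iio] at ha hb
    have he' : f^[a] p = f^[b] p := he
    exact hCinj a (by omega) b (by omega) he'
  have hdisj : Disjoint (periodicPts f \ {x | ∃ j, f^[j] w = x})
      {x | ∃ i ≤ s, f^[i] p = x} := by
    rw [Set.disjoint_right]
    rintro x ⟨i, hi, rfl⟩ ⟨hP, hK⟩
    rcases lt_or_ge i L with h1 | h1
    · exact not_mem_of_lt_level (show i < level f p by omega) hP
    · apply hK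
      refine ⟨(i - L) + (m - d), ?_⟩
      rw [iterate_add_apply, hback, ← hIter i h1]
  have hcard : (periodicPts g).ncard + m = (periodicPts f).ncard + (s + 1) := by
    have h1 : (periodicPts g).ncard =
        (periodicPts f \ {x | ∃ j, f^[j] w = x}).ncard
          + {x | ∃ i ≤ s, f^[i] p = x}.ncard := by
      rw [hPg]
      exact Set.ncard_union_eq hdisj (Set.toFinite _) (Set.toFinite _)
    have h2 : (periodicPts f \ {x | ∃ j, f^[j] w = x}).ncard
        = (periodicPts f).ncard - m := by
      rw [Set.ncard_diff hKsub, hKcard]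
    have h3 : m ≤ (periodicPts f).ncard := by
      rw [← hKcard]; exact Set.ncard_le_ncard hKsub (Set.toFinite _)
    rw [h1, h2, hCcard]; omega
  have hrPg : r ∈ periodicPts g := by
    rw [hPg]; right; exact ⟨L, by omega, hr_def.symm⟩
  have htail : ∀ c, d < c → c < m → f^[c] r ∉ periodicPts g := by
    intro c hc1 hc2 hmem
    rw [hPg] at hmem
    rcases hmem with ⟨hP, hK⟩ | ⟨i, hi, he⟩
    · apply hK
      refine ⟨c - d, ?_⟩
      rw [← hd, ← iterate_add_apply, show c - d + d = c by omega]
    · rcases lt_or_ge i L with h1 | h1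
      · have hip : f^[i] p ∈ periodicPts f := by
          rw [he]; exact iterate_mem_periodicPts hrP c
        exact not_mem_of_lt_level (show i < level f p by omega) hip
      · have := hinj (i - L) c (by omega) hc2 (by rw [← hIter i h1]; exact he)
        omega
  -- dichotomy
  have hdich : ∀ x, level g x ≤ L ∨ root g x = r := by
    intro x
    rcases le_or_gt (level g x) L with h | h
    · exact Or.inl h
    right
    set ℓ := level f x with hℓdef
    have hℓL : ℓ ≤ L := hmax x
    have hyP : f^[ℓ] x ∈ periodicPts f := iterate_level_mem f x
    have hgf : ∀ i ≤ ℓ, g^[i] x = f^[i] x := by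
      intro i hi
      apply iterate_update_eq
      intro t ht hte
      have hnp : f^[t] x ∉ periodicPts f := not_mem_of_lt_level (by omega)
      rw [hte] at hnp; exact hnp hwP
    have hynPg : f^[ℓ] x ∉ periodicPts g := by
      intro hmem
      have : level g x ≤ ℓ := level_le (by rw [hgf ℓ le_rfl]; exact hmem)
      omega
    have hyK : f^[ℓ] x ∈ {x | ∃ j, f^[j] w = x} := by
      by_contra hn
      exact hynPg (by rw [hPg]; exact Or.inl ⟨hyP, hn⟩)
    have hyC : f^[ℓ] x ∉ {x | ∃ i ≤ s, f^[i] p = x} := fun hc =>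
      hynPg (by rw [hPg]; exact Or.inr hc)
    obtain ⟨j, hj⟩ := hyK
    set j₀ := (j + d) % m with hj₀def
    have hj₀ : f^[j₀] r = f^[ℓ] x := by
      have e1 : f^[j + d] r = f^[ℓ] x := by
        rw [iterate_add_apply, hd, hj]
      rw [hj₀def, show f^[(j + d) % m] r = f^[(j + d) % minimalPeriod f r] r by rw [← hm],
        iterate_mod_minimalPeriod_eq, e1]
    have hj₀m : j₀ < m := Nat.mod_lt _ (by omega)
    have hj₀d : d < j₀ := by
      by_contra hle
      push_neg at hle
      refine hyC ⟨L + j₀, ?_, ?_⟩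
      · rw [hs_def]; omega
      · rw [hIter (L + j₀) (by omega), show L + j₀ - L = j₀ by omega, hj₀]
    have hseg : ∀ i ≤ m - j₀, f^[ℓ + i] x = f^[j₀ + i] r := by
      intro i hi
      rw [show ℓ + i = i + ℓ by omega, iterate_add_apply, ← hj₀,
        show j₀ + i = i + j₀ by omega, iterate_add_apply]
    have hTr : f^[ℓ + (m - j₀)] x = r := by
      rw [hseg _ le_rfl, show j₀ + (m - j₀) = m by omega, hperiod]
    have hpre : ∀ i < ℓ + (m - j₀), f^[i] x ∉ periodicPts g := by
      intro i hi hmem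
      rcases lt_or_ge i ℓ with h2 | h2
      · rw [hPg] at hmem
        rcases hmem with ⟨hP, -⟩ | ⟨i', hi', he⟩
        · exact not_mem_of_lt_level (show i < level f x by omega) hP
        · rcases lt_or_ge i' L with h3 | h3
          · have e1 : level f (f^[i] x) = ℓ - i := by
              rw [(level_iterate (show i ≤ level f x by omega)).1]
            have e2 : level f (f^[i'] p) = L - i' := by
              rw [(level_iterate (show i' ≤ level f p by omega)).1, hpL]
            rw [he, e1] at e2
            have e3 : f^[ℓ] x = f^[(ℓ - i) + i'] p := by
              rw [iterate_add_apply, he, ← iterate_add_apply,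
                show ℓ - i + i = ℓ by omega]
            have e4 : (ℓ - i) + i' = L := by omega
            rw [e4, ← hr_def] at e3
            rw [e3] at hynPg
            exact hynPg hrPg
          · have hpp : f^[i'] p ∈ periodicPts f := by
              rw [hIter i' h3]; exact iterate_mem_periodicPts hrP _
            rw [he] at hpp
            exact not_mem_of_lt_level (show i < level f x by omega) hpp
      · have e5 : f^[i] x = f^[j₀ + (i - ℓ)] r := by
          have h6 := hseg (i - ℓ) (by omega)
          rwa [show ℓ + (i - ℓ) = i by omega] at h6
        rw [e5] at hmem
        exact htail _ (by omega) (by omega) hmem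
    have hgfT : ∀ i ≤ ℓ + (m - j₀), g^[i] x = f^[i] x := by
      intro i hi
      apply iterate_update_eq
      intro t ht hte
      have := hpre t (by omega)
      rw [hte] at this
      exact this hwPg
    have hspec := level_root_spec (f := g) (v := x) (t := ℓ + (m - j₀))
      (fun i hi => by rw [hgfT i (le_of_lt hi)]; exact hpre i hi)
      (by rw [hgfT _ le_rfl, hTr]; exact hrPg)
    rw [hspec.2, hgfT _ le_rfl, hTr]
  -- tail vertex computation
  have htailv : d + 1 < m →
      level g (f w) = m - d - 1 ∧ root g (f w) = r := by
    intro hdm1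
    have hp2 : ∀ i, f^[i] (f w) = f^[d + 1 + i] r := by
      intro i
      rw [show f w = f^[d + 1] r by
          rw [← hd]; exact (iterate_succ_apply' f d r).symm,
        ← iterate_add_apply, show i + (d + 1) = d + 1 + i by omega]
    have hpre2 : ∀ i < m - d - 1, f^[i] (f w) ∉ periodicPts g := by
      intro i hi
      rw [hp2]
      exact htail _ (by omega) (by omega)
    have hgf2 : ∀ i ≤ m - d - 1, g^[i] (f w) = f^[i] (f w) := by
      intro i hi
      apply iterate_update_eq
      intro t ht hte
      have := hpre2 t (by omega)
      rw [hte] at this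
      exact this hwPg
    have hend : f^[m - d - 1] (f w) = r := by
      rw [hp2, show d + 1 + (m - d - 1) = m by omega, hperiod]
    have hspec := level_root_spec (f := g) (v := f w) (t := m - d - 1)
      (fun i hi => by rw [hgf2 i (le_of_lt hi)]; exact hpre2 i hi)
      (by rw [hgf2 _ le_rfl, hend]; exact hrPg)
    exact ⟨hspec.1, by rw [hspec.2, hgf2 _ le_rfl, hend]⟩
  exact ⟨hPg, hcard, hdich, htailv⟩

end RC

namespace RC
variable {V : Type} [Fintype V] [DecidableEq V]

lemma claim1 [Nonempty V] {E : V → Multiset V}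
    (hnogood : ∀ g : V → V, IsSpanning E g → ¬ GoodStat g)
    {f : V → V} (hf : IsSpanning E f)
    (hlex : ∀ g : V → V, IsSpanning E g → Phi g ≤ Phi f)
    {p : V} (hp : level f p = maxLevel f) (hL1 : 1 ≤ maxLevel f)
    {w : V} (hwe : p ∈ E w) :
    w ∈ periodicPts f ∧ f^[maxLevel f + 1] w = f^[maxLevel f] p := by
  set L := maxLevel f with hLdef
  have hmax : ∀ x, level f x ≤ L := fun x => level_le_maxLevel f x
  set g := update f w p with hg_def
  have hgs : IsSpanning E g := spanning_update hf hwe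
  have hgood := hnogood g hgs
  have hglex := hlex g hgs
  by_cases hwp : w ∈ periodicPts f
  · by_cases hcyc : ∃ t, f^[t] (f^[L] p) = w
    · -- w on the root cycle of p
      obtain ⟨t, ht⟩ := hcyc
      set r := f^[L] p with hr_def
      have hrP : r ∈ periodicPts f := by
        have := iterate_level_mem f p; rwa [hp] at this
      set m := minimalPeriod f r with hm_def
      have hm0 : 0 < m := minimalPeriod_pos_of_mem_periodicPts hrP
      set d := t % m with hd_def
      have hd : f^[d] r = w := by
        rw [hd_def, hm_def, iterate_mod_minimalPeriod_eq, ht]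
      have hdm : d < m := Nat.mod_lt _ hm0
      obtain ⟨hPg, hcard, hdich, htailv⟩ :=
        S4main (f := f) (p := p) (w := w) (L := L) (d := d) (m := m)
          hmax hp hd hm_def hdm
      rw [← hg_def] at hPg hcard hdich htailv
      rcases lt_trichotomy m (L + d + 1) with hlt | heq | hgt
      · -- strictly more cyclic vertices: contradicts lex maximality
        exfalso
        have : cyc f < cyc g := by
          unfold cyc; omega
        exact absurd (phi_lt_of_cyc_lt this) (by omega)
      · -- the surviving case
        refine ⟨hwp, ?_⟩
        rw [← hd, ← iterate_add_apply, show L + 1 + d = m by omega, hm_def]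
        exact isPeriodicPt_minimalPeriod f r
      · -- strictly fewer: the new subgraph is good, contradiction
        exfalso
        apply hgood
        have hbig : ∃ v, L < level g v := by
          refine ⟨f w, ?_⟩
          rw [(htailv (by omega)).1]
          omega
        refine good_of_dichotomy (r := r) hbig ?_
        intro v hv
        rcases hdich v with h | h
        · omega
        · exact h
    · -- w periodic, not on the root cycle: good subgraph, contradiction
      exact absurd (S3good hmax hp hwp hcyc) hgood
  · by_cases hhit : ∃ t, f^[t] p = w
    · -- new cycle created: more cyclic vertices
      exfalso
      obtain ⟨t, ht⟩ := hhit
      have hss := periodicPts_update_ssubset (z := p) hwp ht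
      have : cyc f < cyc g := Set.ncard_lt_ncard hss (Set.toFinite _)
      exact absurd (phi_lt_of_cyc_lt this) (by omega)
    · -- w a tree vertex not above p: level increases
      exfalso
      push_neg at hhit
      have hPg : periodicPts g = periodicPts f := periodicPts_update_eq hwp hhit
      have hwg : w ∉ periodicPts g := by rw [hPg]; exact hwp
      have hlev : level g w = level g p + 1 := by
        have := level_succ_of_not_periodic (f := g) hwg
        rw [show g w = p from upd_self] at this
        exact this.1
      have hlp : level g p = L := by
        rw [(level_root_update_eq hhit).1, hp]
      have : maxLevel f < maxLevel g := by
        have h2 : level g w ≤ maxLevel g := level_le_maxLevel g w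
        omega
      have : cyc f = cyc g := by unfold cyc; rw [hPg]
      exact absurd (phi_lt_of_cyc_eq this (by omega)) (by omega)

end RC

namespace RC
variable {V : Type} [Fintype V] [DecidableEq V]

lemma claim2 [Nonempty V] {E : V → Multiset V}
    (hconn : ∀ u v : V, Relation.ReflTransGen (fun a b => b ∈ E a) u v)
    (hV : 1 < Fintype.card V)
    (hnogood : ∀ g : V → V, IsSpanning E g → ¬ GoodStat g)
    {f : V → V} (hf : IsSpanning E f)
    (hlex : ∀ g : V → V, IsSpanning E g → Phi g ≤ Phi f)
    {p : V} (hp : level f p = maxLevel f) (hL1 : 1 ≤ maxLevel f) :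
    ∀ z ∈ E (f^[maxLevel f - 1] p), z = f^[maxLevel f] p := by
  intro z hz
  by_contra hne
  set L := maxLevel f with hLdef
  have hmax : ∀ x, level f x ≤ L := fun x => level_le_maxLevel f x
  have hrP : f^[L] p ∈ periodicPts f := by
    have := iterate_level_mem f p; rwa [hp] at this
  have hlu : level f (f^[L - 1] p) = 1 := by
    have h := (level_iterate (show L - 1 ≤ level f p by rw [hp]; omega)).1
    rw [hp] at h
    rw [h]
    omega
  have hunp : f^[L - 1] p ∉ periodicPts f := fun hmem => by
    have := level_eq_zero_iff.2 hmem
    omega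
  have hfu : f (f^[L - 1] p) = f^[L] p := by
    have h1 := iterate_succ_apply' f (L - 1) p
    rw [Nat.succ_eq_add_one, show L - 1 + 1 = L by omega] at h1
    exact h1.symm
  have hR4s : IsSpanning E (update f (f^[L - 1] p) z) := spanning_update hf hz
  by_cases hhit : ∃ t, f^[t] z = f^[L - 1] p
  · obtain ⟨t, ht⟩ := hhit
    have hss := periodicPts_update_ssubset (z := z) hunp ht
    have hcl : cyc f < cyc (update f (f^[L - 1] p) z) :=
      Set.ncard_lt_ncard hss (Set.toFinite _)
    have := hlex _ hR4s
    exact absurd (phi_lt_of_cyc_lt hcl) (by omega)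
  · push_neg at hhit
    have hPR4 : periodicPts (update f (f^[L - 1] p) z) = periodicPts f :=
      periodicPts_update_eq hunp hhit
    have hpre : ∀ i ≤ L - 1, (update f (f^[L - 1] p) z)^[i] p = f^[i] p := by
      intro i hi
      apply iterate_update_eq
      intro t' ht' hte
      have e1 : level f (f^[t'] p) = L - t' := by
        rw [(level_iterate (show t' ≤ level f p by rw [hp]; omega)).1, hp]
      rw [hte, hlu] at e1
      omega
    have hstep : (update f (f^[L - 1] p) z)^[L] p = z := by
      have h1 : (update f (f^[L - 1] p) z)^[(L - 1) + 1] p = z := by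
        rw [iterate_succ_apply', hpre (L - 1) le_rfl, upd_self]
      rwa [show L - 1 + 1 = L by omega] at h1
    have hzit : ∀ i, (update f (f^[L - 1] p) z)^[i] z = f^[i] z := fun i =>
      iterate_update_eq (fun t' _ => hhit t')
    have hfull : ∀ i, (update f (f^[L - 1] p) z)^[L + i] p = f^[i] z := by
      intro i
      rw [show L + i = i + L by omega, iterate_add_apply, hstep, hzit]
    have hspec := level_root_spec (f := update f (f^[L - 1] p) z) (v := p)
        (t := L + level f z)
      (by
        intro i hi
        rcases lt_or_ge i L with h2 | h2
        · rw [hpre i (by omega)]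
          intro hmem
          rw [hPR4] at hmem
          exact not_mem_of_lt_level (show i < level f p by rw [hp]; omega) hmem
        · rw [show i = L + (i - L) by omega, hfull]
          intro hmem
          rw [hPR4] at hmem
          exact not_mem_of_lt_level (show i - L < level f z by omega) hmem)
      (by rw [hfull (level f z), hPR4]; exact iterate_level_mem f z)
    rcases Nat.eq_zero_or_pos (level f z) with h0 | hpos
    · -- z is periodic: use claim1 twice
      have hlev4 : level (update f (f^[L - 1] p) z) p = L := by
        rw [hspec.1, h0]
        omega
      have hroot4 : (update f (f^[L - 1] p) z)^[L] p = z := hstep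
      have hceq : cyc (update f (f^[L - 1] p) z) = cyc f := by
        unfold cyc; rw [hPR4]
      have hmlev : maxLevel (update f (f^[L - 1] p) z) = L := by
        have hle : maxLevel (update f (f^[L - 1] p) z) ≤ L :=
          maxLevel_lt_of_phi (hlex _ hR4s) hceq.symm
        have hge := level_le_maxLevel (update f (f^[L - 1] p) z) p
        omega
      have hphi4 : Phi (update f (f^[L - 1] p) z) = Phi f := by
        unfold Phi
        rw [hmlev, hceq, hLdef]
      have hlex4 : ∀ g : V → V, IsSpanning E g →
          Phi g ≤ Phi (update f (f^[L - 1] p) z) := by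
        intro g hg
        rw [hphi4]; exact hlex g hg
      obtain ⟨w₁, hw₁⟩ := exists_in_edge hconn hV p
      have hc1f := claim1 hnogood hf hlex hp hL1 hw₁
      have hc1R := claim1 hnogood hR4s hlex4
        (by rw [hlev4, hmlev]) (by omega) hw₁
      have hw₁P : w₁ ∈ periodicPts f := hc1f.1
      have havoidw : ∀ i, f^[i] w₁ ≠ f^[L - 1] p :=
        orbit_avoids_of_periodic hunp hw₁P
      have hiter : (update f (f^[L - 1] p) z)^[L + 1] w₁ = f^[L + 1] w₁ :=
        iterate_update_eq (fun t' _ => havoidw t')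
      have h2 := hc1R.2
      rw [hmlev, hiter, hc1f.2, hroot4] at h2
      -- h2 : r = z  (f^[L] p = z)
      exact hne h2.symm
    · -- level of p increased: contradiction with lex maximality
      have hceq : cyc f = cyc (update f (f^[L - 1] p) z) := by
        unfold cyc; rw [hPR4]
      have hgt : maxLevel f < maxLevel (update f (f^[L - 1] p) z) := by
        have h2 := level_le_maxLevel (update f (f^[L - 1] p) z) p
        rw [hspec.1] at h2
        omega
      have := hlex _ hR4s
      exact absurd (phi_lt_of_cyc_eq hceq hgt) (by omega)

end RC

namespace RC
variable {V : Type} [Fintype V] [DecidableEq V]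

lemma not_all_bunches [Nonempty V] {E : V → Multiset V} {k : ℕ} (hAGW : IsAGW E k)
    (hV : 1 < Fintype.card V)
    {f : V → V} (hf : IsSpanning E f) (hall : ∀ v, v ∈ periodicPts f)
    (hsing : ∀ a : V, ∀ b ∈ E a, b = f a) : False := by
  have hreach : ∀ u v : V, ∃ i, f^[i] u = v := by
    intro u v
    have h := hAGW.2.1 u v
    induction h with
    | refl => exact ⟨0, rfl⟩
    | @tail b c hub hbc ih =>
      obtain ⟨i, hi⟩ := ih
      exact ⟨i + 1, by rw [iterate_succ_apply', hi]; exact (hsing b c hbc).symm⟩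
  obtain ⟨v₀⟩ := (inferInstance : Nonempty V)
  have hm₀pos : 0 < minimalPeriod f v₀ :=
    minimalPeriod_pos_of_mem_periodicPts (hall v₀)
  have hm₀2 : 2 ≤ minimalPeriod f v₀ := by
    by_contra hlt
    have hm1 : minimalPeriod f v₀ = 1 := by omega
    have hfix : f v₀ = v₀ := by
      have h1 := isPeriodicPt_minimalPeriod f v₀
      rw [hm1] at h1
      exact h1
    have hiter : ∀ j, f^[j] v₀ = v₀ := by
      intro j
      induction j with
      | zero => rfl
      | succ n ih => rw [iterate_succ_apply', ih, hfix]
    obtain ⟨u, hu⟩ := Fintype.exists_ne_of_one_lt_card hV v₀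
    obtain ⟨i, hi⟩ := hreach v₀ u
    exact hu (by rw [← hi, hiter i])
  have hminx : ∀ x : V, minimalPeriod f x = minimalPeriod f v₀ := by
    intro x
    obtain ⟨i, hi⟩ := hreach v₀ x
    rw [← hi, minimalPeriod_iterate_eq (hall v₀)]
  have hdvd : ∀ l : List V, IsCycle E l → minimalPeriod f v₀ ∣ l.length := by
    intro l hl
    obtain ⟨hne, hnodup, hchain, hlast⟩ := hl
    have hlen : 0 < l.length := List.length_pos_iff.2 hne
    have hget : ∀ i (hi : i < l.length), l.get ⟨i, hi⟩ = f^[i] (l.head hne) := by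
      intro i
      induction i with
      | zero =>
        intro hi
        simp only [iterate_zero_apply]
        exact List.get_mk_zero hi
      | succ n ih =>
        intro hi
        have hn : n < l.length := by omega
        have hc := List.isChain_iff_getElem.1 hchain n (by omega)
        calc l.get ⟨n + 1, hi⟩ = f (l.get ⟨n, hn⟩) := hsing _ _ hc
          _ = f (f^[n] (l.head hne)) := by rw [ih hn]
          _ = f^[n + 1] (l.head hne) := (iterate_succ_apply' f n (l.head hne)).symm
    have hlast' : l.getLast hne = f^[l.length - 1] (l.head hne) := by
      rw [List.getLast_eq_getElem]
      exact hget _ (by omega)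
    have h2 : f^[(l.length - 1) + 1] (l.head hne) = l.head hne := by
      rw [iterate_succ_apply', ← hlast']
      exact (hsing _ _ hlast).symm
    have hcyc : f^[l.length] (l.head hne) = l.head hne := by
      rwa [show l.length - 1 + 1 = l.length by omega] at h2
    have hdv : minimalPeriod f (l.head hne) ∣ l.length :=
      IsPeriodicPt.minimalPeriod_dvd hcyc
    rwa [hminx (l.head hne)] at hdv
  have := hAGW.2.2 (minimalPeriod f v₀) hdvd
  omega

lemma caseA_good [Nonempty V] {E : V → Multiset V} {f : V → V} (hf : IsSpanning E f)
    (hall : ∀ v, v ∈ periodicPts f) {a b : V} (hb : b ∈ E a) (hbne : b ≠ f a) :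
    GoodStat (update f a b) := by
  have hmax : ∀ x, level f x ≤ 0 := fun x => le_of_eq (level_eq_zero_iff.2 (hall x))
  have hbL : level f b = 0 := level_eq_zero_iff.2 (hall b)
  by_cases hcyc : ∃ t, f^[t] (f^[(0 : ℕ)] b) = a
  · obtain ⟨t, ht⟩ := hcyc
    simp only [iterate_zero_apply] at ht
    have hm0 : 0 < minimalPeriod f b := minimalPeriod_pos_of_mem_periodicPts (hall b)
    have hd : f^[t % minimalPeriod f b] b = a := by
      rw [iterate_mod_minimalPeriod_eq, ht]
    have hdm : t % minimalPeriod f b < minimalPeriod f b := Nat.mod_lt _ hm0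
    have hd1m : t % minimalPeriod f b + 1 < minimalPeriod f b := by
      rcases Nat.lt_or_ge (t % minimalPeriod f b + 1) (minimalPeriod f b) with h | h
      · exact h
      · exfalso
        have h1 : f^[t % minimalPeriod f b + 1] b = b := by
          rw [show t % minimalPeriod f b + 1 = minimalPeriod f b by omega]
          exact isPeriodicPt_minimalPeriod f b
        have h2 : f (f^[t % minimalPeriod f b] b) = b :=
          (iterate_succ_apply' f _ b).symm.trans h1
        rw [hd] at h2
        exact hbne h2.symm
    obtain ⟨hPg, hcard, hdich, htailv⟩ :=
      S4main (L := 0) (p := b) (w := a) (d := t % minimalPeriod f b)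
        (m := minimalPeriod f b) hmax hbL (by simpa using hd) (by simp) hdm
    obtain ⟨hlev, hroot⟩ := htailv hd1m
    refine good_of_dichotomy (L₀ := 0) (r := f^[(0 : ℕ)] b) ⟨f a, ?_⟩ ?_
    · rw [hlev]; omega
    · intro v hv
      exact (hdich v).resolve_left (by omega)
  · exact S3good (L := 0) hmax hbL (hall a) hcyc

end RC

/-- If no vertex of an AGW graph with at least two vertices has two
incoming bunches, then the graph has a spanning subgraph whose maximal level `L` is
positive and all whose vertices of level `L` lie in one tree (have the same root). -/
theorem exists_spanning_max_level_one_tree {V : Type} [Fintype V] [DecidableEq V]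
    [Nonempty V] (E : V → Multiset V) (k : ℕ) (hAGW : IsAGW E k)
    (hV : 1 < Fintype.card V)
    (hnb : ¬ ∃ p q r : V, q ≠ r ∧ E q = Multiset.replicate k p ∧
      E r = Multiset.replicate k p) :
    ∃ f : V → V, IsSpanning E f ∧
      ∃ L : ℕ, 0 < L ∧ (∀ v : V, level f v ≤ L) ∧ (∃ v : V, level f v = L) ∧
        ∀ u v : V, level f u = L → level f v = L → root f u = root f v := by
  classical
  by_contra hcon
  have hnogood : ∀ g : V → V, IsSpanning E g → ¬ RC.GoodStat g := by
    intro g hg hgood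
    exact hcon ⟨g, hg, hgood⟩
  obtain ⟨hcard, hconn, hgcd⟩ := hAGW
  have hex : ∀ v : V, ∃ x, x ∈ E v := fun v => RC.exists_out_edge hconn hV v
  choose f₀ hf₀ using hex
  by_cases hallex : ∃ f : V → V, IsSpanning E f ∧ ∀ v, v ∈ Function.periodicPts f
  · obtain ⟨f, hf, hall⟩ := hallex
    by_cases hsing : ∀ a : V, ∀ b ∈ E a, b = f a
    · exact RC.not_all_bunches ⟨hcard, hconn, hgcd⟩ hV hf hall hsing
    · push_neg at hsing
      obtain ⟨a, b, hb, hbne⟩ := hsing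
      exact hnogood _ (RC.spanning_update hf hb) (RC.caseA_good hf hall hb hbne)
  · push_neg at hallex
    obtain ⟨f, hfS, hfmax⟩ := Finset.exists_max_image
      (Finset.univ.filter (fun g : V → V => IsSpanning E g)) RC.Phi
      ⟨f₀, by simp only [Finset.mem_filter, Finset.mem_univ, true_and]; exact hf₀⟩
    have hf : IsSpanning E f := (Finset.mem_filter.1 hfS).2
    have hlex : ∀ g : V → V, IsSpanning E g → RC.Phi g ≤ RC.Phi f := by
      intro g hg
      exact hfmax g (Finset.mem_filter.2 ⟨Finset.mem_univ g, hg⟩)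
    obtain ⟨v₁, hv₁⟩ := hallex f hf
    have hL1 : 1 ≤ RC.maxLevel f := by
      have h1 : level f v₁ ≠ 0 := fun h => hv₁ (RC.level_eq_zero_iff.1 h)
      have h2 := RC.level_le_maxLevel f v₁
      omega
    obtain ⟨p, -, hpm⟩ := Finset.exists_mem_eq_sup Finset.univ Finset.univ_nonempty (level f)
    have hp : level f p = RC.maxLevel f := hpm.symm
    set L := RC.maxLevel f with hL_def
    have hmax : ∀ x, level f x ≤ L := fun x => RC.level_le_maxLevel f x
    obtain ⟨w₀, hw₀⟩ := RC.exists_in_edge hconn hV p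
    have hc1 := RC.claim1 hnogood hf hlex hp hL1 hw₀
    have hrP : f^[L] p ∈ Function.periodicPts f := by
      have := RC.iterate_level_mem f p; rwa [hp] at this
    obtain ⟨t, ht⟩ := RC.exists_iterate_back hc1.1 hc1.2
    have hm0 : 0 < Function.minimalPeriod f (f^[L] p) :=
      Function.minimalPeriod_pos_of_mem_periodicPts hrP
    set m := Function.minimalPeriod f (f^[L] p) with hm_def
    set d := t % m with hd_def
    have hd : f^[d] (f^[L] p) = w₀ := by
      rw [hd_def, hm_def, Function.iterate_mod_minimalPeriod_eq, ht]
    have hdm : d < m := Nat.mod_lt _ hm0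
    obtain ⟨hPg, hcardg, hdich, htailv⟩ := RC.S4main hmax hp hd hm_def hdm
    set g := Function.update f w₀ p with hg_def
    have hgs : IsSpanning E g := RC.spanning_update hf hw₀
    have hglex0 := hlex g hgs
    have heq : m = L + d + 1 := by
      rcases lt_trichotomy m (L + d + 1) with hlt | heq | hgt
      · exfalso
        have hcl : RC.cyc f < RC.cyc g := by unfold RC.cyc; omega
        exact absurd (RC.phi_lt_of_cyc_lt hcl) (by omega)
      · exact heq
      · exfalso
        apply hnogood g hgs
        have hbig : ∃ v, L < level g v :=
          ⟨f w₀, by rw [(htailv (by omega)).1]; omega⟩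
        exact RC.good_of_dichotomy (r := f^[L] p) hbig
          (fun v hv => (hdich v).resolve_left (by omega))
    have hd1m : d + 1 < m := by omega
    obtain ⟨hlev2, hroot2⟩ := htailv hd1m
    have hlev2' : level g (f w₀) = L := by rw [hlev2]; omega
    have hcycEq : RC.cyc g = RC.cyc f := by unfold RC.cyc; omega
    have hmg : RC.maxLevel g = L := by
      have h1 : RC.maxLevel g ≤ L := RC.maxLevel_lt_of_phi hglex0 hcycEq.symm
      have h2 := RC.level_le_maxLevel g (f w₀)
      omega
    have hphig : RC.Phi g = RC.Phi f := by
      unfold RC.Phi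
      rw [hmg, hcycEq, hL_def]
    have hglex : ∀ h : V → V, IsSpanning E h → RC.Phi h ≤ RC.Phi g := by
      intro h hh; rw [hphig]; exact hlex h hh
    have hpg2 : level g (f w₀) = RC.maxLevel g := by rw [hlev2', hmg]
    have hcl2f := RC.claim2 hconn hV hnogood hf hlex hp hL1
    have hcl2g := RC.claim2 hconn hV hnogood hgs hglex hpg2 (by rw [hmg]; omega)
    have hmw : Function.minimalPeriod f w₀ = m := by
      rw [← hd, RC.minimalPeriod_iterate_eq hrP, hm_def]
    have havoid : ∀ i < L - 1, f^[i] (f w₀) ≠ w₀ := by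
      intro i hi he
      have h1 : f^[i + 1] w₀ = w₀ := by rw [Function.iterate_succ_apply]; exact he
      have h2 : Function.minimalPeriod f w₀ ∣ i + 1 :=
        Function.IsPeriodicPt.minimalPeriod_dvd h1
      rw [hmw] at h2
      have := Nat.le_of_dvd (by omega) h2
      omega
    have hb₂ : g^[L - 1] (f w₀) = f^[L] w₀ := by
      have e1 : g^[L - 1] (f w₀) = f^[L - 1] (f w₀) :=
        RC.iterate_update_eq (fun i hi => havoid i hi)
      have e3 : f^[L] w₀ = f^[L - 1] (f w₀) := by
        conv_lhs => rw [show L = L - 1 + 1 by omega]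
        exact Function.iterate_succ_apply f (L - 1) w₀
      rw [e1, ← e3]
    have hgL : g^[L] (f w₀) = f^[L] p := by
      have h1 : root g (f w₀) = g^[level g (f w₀)] (f w₀) := rfl
      rw [hlev2'] at h1
      rw [← h1, hroot2]
    have hb₁nP : f^[L - 1] p ∉ Function.periodicPts f := by
      apply RC.not_mem_of_lt_level
      rw [hp]; omega
    have hb₂P : f^[L] w₀ ∈ Function.periodicPts f := RC.iterate_mem_periodicPts hc1.1 L
    have hne12 : f^[L - 1] p ≠ f^[L] w₀ := fun he => hb₁nP (by rw [he]; exact hb₂P)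
    have hE1 : E (f^[L - 1] p) = Multiset.replicate k (f^[L] p) := by
      rw [Multiset.eq_replicate]
      exact ⟨hcard _, fun z hz => hcl2f z hz⟩
    have hE2 : E (f^[L] w₀) = Multiset.replicate k (f^[L] p) := by
      rw [Multiset.eq_replicate]
      refine ⟨hcard _, fun z hz => ?_⟩
      have h3 := hcl2g z (by rw [hmg, hb₂]; exact hz)
      rw [hmg, hgL] at h3
      exact h3
    exact hnb ⟨f^[L] p, f^[L - 1] p, f^[L] w₀, hne12, hE1, hE2⟩
end

section
/- For any coloring of an AGW graph and any weight function w, if the image V·s of a word s is an F-clique, then for every q ∈ V·s the preimage δ_s⁻¹({q}) is an F-maximal set, i.e., its weight equals w*. -/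
set_option linter.unusedSectionVars false
section RoadAux

variable {V : Type} [Fintype V] [DecidableEq V] {k : ℕ}

lemma wordMap_nil (δ : Fin k → V → V) (p : V) : wordMap δ [] p = p := rfl

lemma wordMap_cons (δ : Fin k → V → V) (a : Fin k) (s : List (Fin k)) (p : V) :
    wordMap δ (a :: s) p = wordMap δ s (δ a p) := rfl

/-- Preimage of a set under the map of a word. -/
def preim (δ : Fin k → V → V) (s : List (Fin k)) (D : Finset V) : Finset V :=
  Finset.univ.filter (fun p => wordMap δ s p ∈ D)

lemma mem_preim {δ : Fin k → V → V} {s : List (Fin k)} {D : Finset V} {p : V} :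
    p ∈ preim δ s D ↔ wordMap δ s p ∈ D := by simp [preim]

lemma preim_nil (δ : Fin k → V → V) (D : Finset V) : preim δ [] D = D := by
  ext p; simp [mem_preim, wordMap_nil]

lemma preim_cons (δ : Fin k → V → V) (a : Fin k) (s : List (Fin k)) (D : Finset V) :
    preim δ (a :: s) D = preim δ [a] (preim δ s D) := by
  ext p; simp [mem_preim, wordMap_cons, wordMap_nil]

lemma syncSet_nonempty {δ : Fin k → V → V} {D : Finset V} (h : IsSyncSet δ D) :
    D.Nonempty := by
  obtain ⟨t, ht⟩ := h
  by_contra hne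
  rw [Finset.not_nonempty_iff_eq_empty] at hne
  simp [hne] at ht

lemma syncSet_pair {δ : Fin k → V → V} {D : Finset V} (h : IsSyncSet δ D)
    {p q : V} (hp : p ∈ D) (hq : q ∈ D) : SyncPair δ p q := by
  obtain ⟨t, ht⟩ := h
  obtain ⟨c, hc⟩ := Finset.card_eq_one.mp ht
  refine ⟨t, ?_⟩
  have h1 : wordMap δ t p ∈ D.image (wordMap δ t) := Finset.mem_image_of_mem _ hp
  have h2 : wordMap δ t q ∈ D.image (wordMap δ t) := Finset.mem_image_of_mem _ hq
  rw [hc, Finset.mem_singleton] at h1 h2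
  rw [h1, h2]

lemma syncSet_of_nonempty_subsingleton_image {δ : Fin k → V → V} {D : Finset V}
    (hne : D.Nonempty) {t : List (Fin k)} {c : V}
    (h : ∀ p ∈ D, wordMap δ t p = c) : IsSyncSet δ D := by
  refine ⟨t, ?_⟩
  rw [Finset.card_eq_one]
  refine ⟨c, ?_⟩
  ext x
  simp only [Finset.mem_image, Finset.mem_singleton]
  constructor
  · rintro ⟨p, hp, rfl⟩; exact h p hp
  · rintro rfl; obtain ⟨p, hp⟩ := hne; exact ⟨p, hp, h p hp⟩

lemma one_le_weight_of_nonempty {w : V → ℕ} (hw1 : ∀ v, 1 ≤ w v) {D : Finset V}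
    (h : D.Nonempty) : 1 ≤ weight w D := by
  obtain ⟨p, hp⟩ := h
  calc 1 ≤ w p := hw1 p
    _ ≤ weight w D := Finset.single_le_sum (fun i _ => Nat.zero_le _) hp

/-- One-step averaging: the letter preimages of `D` have total weight `k * weight D`. -/
lemma sum_weight_preim_letter {E : V → Multiset V} {δ : Fin k → V → V} {w : V → ℕ}
    (hδ : IsColoring E δ) (hw : IsWeight E k w) (D : Finset V) :
    ∑ a : Fin k, weight w (preim δ [a] D) = k * weight w D := by
  have key : ∀ p q : V,
      (Finset.univ.filter (fun a : Fin k => δ a p = q)).card = (E p).count q := by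
    intro p q
    rw [← hδ p, Multiset.count_map, Multiset.filter_congr (fun a _ => eq_comm)]
    rfl
  calc ∑ a : Fin k, weight w (preim δ [a] D)
      = ∑ a : Fin k, ∑ p : V, if wordMap δ [a] p ∈ D then w p else 0 := by
        refine Finset.sum_congr rfl fun a _ => ?_
        rw [weight, preim, Finset.sum_filter]
    _ = ∑ p : V, ∑ a : Fin k, if δ a p ∈ D then w p else 0 := by
        rw [Finset.sum_comm]; rfl
    _ = ∑ p : V, ∑ a : Fin k, ∑ q ∈ D, if δ a p = q then w p else 0 := by
        refine Finset.sum_congr rfl fun p _ => Finset.sum_congr rfl fun a _ => ?_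
        rw [Finset.sum_ite_eq D (δ a p) (fun _ => w p)]
    _ = ∑ q ∈ D, ∑ p : V, ∑ a : Fin k, if δ a p = q then w p else 0 := by
        rw [show (∑ p : V, ∑ a : Fin k, ∑ q ∈ D, if δ a p = q then w p else 0)
            = ∑ p : V, ∑ q ∈ D, ∑ a : Fin k, if δ a p = q then w p else 0
          from Finset.sum_congr rfl fun p _ => Finset.sum_comm]
        exact Finset.sum_comm
    _ = ∑ q ∈ D, ∑ p : V, w p * (E p).count q := by
        refine Finset.sum_congr rfl fun q _ => Finset.sum_congr rfl fun p _ => ?_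
        rw [← Finset.sum_filter, Finset.sum_const, key p q, smul_eq_mul, mul_comm]
    _ = ∑ q ∈ D, k * w q := by
        refine Finset.sum_congr rfl fun q _ => hw.2 q
    _ = k * weight w D := by rw [weight, Finset.mul_sum]

lemma FMax_preim_letter {E : V → Multiset V} {δ : Fin k → V → V} {w : V → ℕ}
    (hk : 0 < k) (hδ : IsColoring E δ) (hw : IsWeight E k w)
    {D : Finset V} (hD : IsFMaximal δ w D) (a : Fin k) :
    IsFMaximal δ w (preim δ [a] D) ∧ weight w (preim δ [a] D) = weight w D := by
  obtain ⟨t, ht⟩ := hD.1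
  obtain ⟨c, hc⟩ := Finset.card_eq_one.mp ht
  have himg : ∀ b : Fin k, ∀ p ∈ preim δ [b] D, wordMap δ (b :: t) p = c := by
    intro b p hp
    have h1 : wordMap δ t (δ b p) ∈ D.image (wordMap δ t) :=
      Finset.mem_image_of_mem _ (mem_preim.mp hp)
    rw [hc, Finset.mem_singleton] at h1
    rw [wordMap_cons]
    exact h1
  have hsync : ∀ b : Fin k, (preim δ [b] D).Nonempty → IsSyncSet δ (preim δ [b] D) :=
    fun b hne => syncSet_of_nonempty_subsingleton_image hne (himg b)
  have hle : ∀ b : Fin k, weight w (preim δ [b] D) ≤ weight w D := by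
    intro b
    rcases Finset.eq_empty_or_nonempty (preim δ [b] D) with h | h
    · rw [h]; exact Nat.zero_le _
    · exact hD.2 _ (hsync b h)
  have heq : weight w (preim δ [a] D) = weight w D := by
    by_contra hne
    have hlt : weight w (preim δ [a] D) < weight w D := lt_of_le_of_ne (hle a) hne
    have : ∑ b : Fin k, weight w (preim δ [b] D) < ∑ _b : Fin k, weight w D :=
      Finset.sum_lt_sum (fun b _ => hle b) ⟨a, Finset.mem_univ a, hlt⟩
    rw [sum_weight_preim_letter hδ hw D, Finset.sum_const, Finset.card_univ,
      Fintype.card_fin, smul_eq_mul] at this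
    exact lt_irrefl _ this
  have hne : (preim δ [a] D).Nonempty := by
    rcases Finset.eq_empty_or_nonempty (preim δ [a] D) with h | h
    · exfalso
      have h0 : weight w (preim δ [a] D) = 0 := by rw [h]; simp [weight]
      have h1 : 1 ≤ weight w D :=
        one_le_weight_of_nonempty hw.1 (syncSet_nonempty ⟨t, ht⟩)
      omega
    · exact h
  exact ⟨⟨hsync a hne, fun D' hD' => (hD.2 D' hD').trans heq.ge⟩, heq⟩

lemma FMax_preim {E : V → Multiset V} {δ : Fin k → V → V} {w : V → ℕ}
    (hk : 0 < k) (hδ : IsColoring E δ) (hw : IsWeight E k w)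
    (s : List (Fin k)) {D : Finset V} (hD : IsFMaximal δ w D) :
    IsFMaximal δ w (preim δ s D) ∧ weight w (preim δ s D) = weight w D := by
  induction s generalizing D with
  | nil => rw [preim_nil]; exact ⟨hD, rfl⟩
  | cons a u ih =>
    rw [preim_cons]
    obtain ⟨h1, h2⟩ := ih hD
    obtain ⟨h3, h4⟩ := FMax_preim_letter hk hδ hw h1 a
    exact ⟨h3, h4.trans h2⟩

lemma k_pos {E : V → Multiset V} (hAGW : IsAGW E k) : 0 < k := by
  rcases Nat.eq_zero_or_pos k with h0 | h; swap
  · exact h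
  exfalso
  have : (0 : ℕ) = 1 := by
    apply hAGW.2.2
    intro l hl
    obtain ⟨hne, _, _, hlast⟩ := hl
    have : E (l.getLast hne) = 0 := by
      rw [← Multiset.card_eq_zero, hAGW.1, h0]
    rw [this] at hlast
    exact absurd hlast (Multiset.notMem_zero _)
  omega

lemma exists_word_map {E : V → Multiset V} {δ : Fin k → V → V}
    (hAGW : IsAGW E k) (hδ : IsColoring E δ) (u v : V) :
    ∃ t : List (Fin k), wordMap δ t u = v := by
  have h := hAGW.2.1 u v
  induction h with
  | refl => exact ⟨[], rfl⟩
  | tail _ hedge ih =>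
    obtain ⟨t, ht⟩ := ih
    rename_i b c _
    rw [← hδ b] at hedge
    obtain ⟨a, _, ha⟩ := Multiset.mem_map.mp hedge
    refine ⟨t ++ [a], ?_⟩
    rw [wordMap, List.foldl_append]
    show δ a (wordMap δ t u) = c
    rw [ht, ha]

lemma exists_FMax [Nonempty V] (δ : Fin k → V → V) (w : V → ℕ) :
    ∃ D : Finset V, IsFMaximal δ w D ∧ weight w D = wstar δ w := by
  set S : Set ℕ := {m | ∃ D : Finset V, IsSyncSet δ D ∧ weight w D = m} with hS
  have hne : S.Nonempty := by
    refine ⟨weight w {Classical.arbitrary V}, {Classical.arbitrary V}, ⟨[], ?_⟩, rfl⟩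
    simp
  have hbdd : BddAbove S := by
    refine ⟨weight w Finset.univ, ?_⟩
    rintro m ⟨D, _, rfl⟩
    exact Finset.sum_le_sum_of_subset (Finset.subset_univ D)
  have hmem : wstar δ w ∈ S := Nat.sSup_mem hne hbdd
  obtain ⟨D, hsync, hweight⟩ := hmem
  refine ⟨D, ⟨hsync, fun D' hD' => ?_⟩, hweight⟩
  rw [hweight]
  exact le_csSup hbdd ⟨D', hD', rfl⟩

end RoadAux

/-- If `V·s` is an F-clique, then for every `q ∈ V·s` the preimage
`δ_s⁻¹({q})` is an F-maximal set, i.e. its weight equals `w*`. -/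
theorem preimage_of_FClique_is_F_maximal {V : Type} [Fintype V] [DecidableEq V]
    [Nonempty V] (E : V → Multiset V) (k : ℕ) (hAGW : IsAGW E k)
    (δ : Fin k → V → V) (hδ : IsColoring E δ) (w : V → ℕ) (hw : IsWeight E k w)
    (s : List (Fin k)) (hclq : IsFClique δ (Finset.image (wordMap δ s) Finset.univ))
    (q : V) (hq : q ∈ Finset.image (wordMap δ s) Finset.univ) :
    IsFMaximal δ w (Finset.univ.filter (fun p => wordMap δ s p = q)) ∧
      weight w (Finset.univ.filter (fun p => wordMap δ s p = q)) = wstar δ w := by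
  have hk : 0 < k := k_pos hAGW
  obtain ⟨D₀, hD₀, hw₀⟩ := exists_FMax δ w
  obtain ⟨r, hr⟩ := syncSet_nonempty hD₀.1
  obtain ⟨v, hv⟩ := exists_word_map hAGW hδ q r
  set D' := preim δ v D₀ with hD'def
  obtain ⟨hD'max, hD'w⟩ := FMax_preim hk hδ hw v hD₀
  have hqD' : q ∈ D' := mem_preim.mpr (by rw [hv]; exact hr)
  have hkey : ∀ p : V, wordMap δ s p ∈ D' ↔ wordMap δ s p = q := by
    intro p
    constructor
    · intro hmem
      by_contra hne
      have hxF : wordMap δ s p ∈ Finset.image (wordMap δ s) Finset.univ :=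
        Finset.mem_image_of_mem _ (Finset.mem_univ p)
      exact hclq.2 _ hxF q hq hne (syncSet_pair hD'max.1 hmem hqD')
    · intro h; rw [h]; exact hqD'
  have hset : preim δ s D' = Finset.univ.filter (fun p => wordMap δ s p = q) := by
    ext p
    simp only [mem_preim, Finset.mem_filter, Finset.mem_univ, true_and]
    exact hkey p
  obtain ⟨hmax, hweq⟩ := FMax_preim hk hδ hw s hD'max
  rw [hset] at hmax hweq
  exact ⟨hmax, by rw [hweq, hD'w, hw₀]⟩
end
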